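/- arXiv:1310.0979 — 4 statements merged into one kernel-verified Lean document; each statement's English description precedes it below -/
import Mathlib

section
/- Let n be a positive integer, m an integer with gcd(m,n)=1, and m* an integer with m·m* ≡ 1 (mod n) and m > m*. Set t = m - m* and S(a,b) = 12·s(a,b). Then S(mt+1, nt) = -3 + 2/(nt) + t/n. -/
noncomputable def saw (x : ℝ) : ℝ :=
  if Int.fract x = 0 then 0 else Int.fract x - 1/2

noncomputable def dedekindSum (m n : ℤ) : ℝ :=
  ∑ k ∈ Finset.Icc 1 n.toNat, saw ((k : ℝ) / (n : ℝ)) * saw ((m : ℝ) * (k : ℝ) / (n : ℝ))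

open Finset

lemma sum_range_cast (N : ℕ) : ∑ k ∈ range N, (k:ℝ) = N*(N-1)/2 := by
  induction N with
  | zero => simp
  | succ n ih => rw [Finset.sum_range_succ, ih]; push_cast; ring

lemma sum_range_cast_sq (N : ℕ) : ∑ k ∈ range N, (k:ℝ)^2 = N*(N-1)*(2*N-1)/6 := by
  induction N with
  | zero => simp
  | succ n ih => rw [Finset.sum_range_succ, ih]; push_cast; ring

lemma sum_Ico_int (b : ℤ) (F : ℤ → ℝ) :
    ∑ k ∈ Finset.Ico (0:ℤ) b, F k = ∑ k ∈ range b.toNat, F k := by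
  refine Finset.sum_nbij' (fun k => k.toNat) (fun k => (k:ℤ)) ?_ ?_ ?_ ?_ ?_
  · intro a ha; simp only [Finset.mem_Ico] at ha; simp only [Finset.mem_range]; omega
  · intro a ha; simp only [Finset.mem_range] at ha; simp only [Finset.mem_Ico]; omega
  · intro a ha; simp only [Finset.mem_Ico] at ha
    exact Int.toNat_of_nonneg ha.1
  · intro a _; simp
  · intro a ha; simp only [Finset.mem_Ico] at ha
    rw [Int.toNat_of_nonneg ha.1]

lemma sum_Ico_id (b : ℤ) (hb : 0 ≤ b) :
    ∑ k ∈ Finset.Ico (0:ℤ) b, (k:ℝ) = b*(b-1)/2 := by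
  rw [sum_Ico_int b (fun k => (k:ℝ))]
  simp only [Int.cast_natCast]
  rw [sum_range_cast]
  have h1 : ((b.toNat:ℕ):ℝ) = (b:ℝ) := by exact_mod_cast Int.toNat_of_nonneg hb
  rw [h1]

lemma sum_Ico_sq (b : ℤ) (hb : 0 ≤ b) :
    ∑ k ∈ Finset.Ico (0:ℤ) b, (k:ℝ)^2 = b*(b-1)*(2*b-1)/6 := by
  rw [sum_Ico_int b (fun k => (k:ℝ)^2)]
  simp only [Int.cast_natCast]
  rw [sum_range_cast_sq]
  have h1 : ((b.toNat:ℕ):ℝ) = (b:ℝ) := by exact_mod_cast Int.toNat_of_nonneg hb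
  rw [h1]

lemma sum_Ico_split (a b c : ℤ) (hab : a ≤ b) (hbc : b ≤ c) (F : ℤ → ℝ) :
    ∑ k ∈ Finset.Ico a c, F k = ∑ k ∈ Finset.Ico a b, F k + ∑ k ∈ Finset.Ico b c, F k := by
  rw [← Finset.sum_union (Finset.Ico_disjoint_Ico_consecutive a b c),
    Finset.Ico_union_Ico_eq_Ico hab hbc]

lemma sum_emod_perm {b : ℤ} (hb : 0 < b) (c c' : ℤ) (h : c * c' ≡ 1 [ZMOD b]) (F : ℤ → ℝ) :
    ∑ k ∈ Finset.Ico (0:ℤ) b, F ((c*k) % b) = ∑ k ∈ Finset.Ico (0:ℤ) b, F k := by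
  have hb' : b ≠ 0 := hb.ne'
  have key : ∀ x y : ℤ, x * y ≡ 1 [ZMOD b] → ∀ k ∈ Finset.Ico (0:ℤ) b,
      (y * ((x * k) % b)) % b = k := by
    intro x y hxy k hk
    simp only [Finset.mem_Ico] at hk
    have h1 : (y * ((x * k) % b)) ≡ y * (x * k) [ZMOD b] :=
      Int.ModEq.mul_left y (Int.mod_modEq _ _)
    have h2 : y * (x * k) ≡ 1 * k [ZMOD b] := by
      have := hxy.mul_right k
      calc y * (x * k) = x * y * k := by ring
        _ ≡ 1 * k [ZMOD b] := this
    have h3 := (h1.trans h2).eq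
    rw [one_mul] at h3
    rw [h3, Int.emod_eq_of_lt hk.1 hk.2]
  refine Finset.sum_nbij' (fun k => (c*k) % b) (fun k => (c'*k) % b) ?_ ?_ ?_ ?_ ?_
  · intro a _; simp only [Finset.mem_Ico]
    exact ⟨Int.emod_nonneg _ hb', Int.emod_lt_of_pos _ hb⟩
  · intro a _; simp only [Finset.mem_Ico]
    exact ⟨Int.emod_nonneg _ hb', Int.emod_lt_of_pos _ hb⟩
  · intro a ha; exact key c c' h a ha
  · intro a ha
    exact key c' c (by rwa [mul_comm] at h) a ha
  · intro a _; rfl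

lemma fract_intCast_div (x b : ℤ) (hb : 0 < b) :
    Int.fract ((x:ℝ)/(b:ℝ)) = ((x % b : ℤ):ℝ)/(b:ℝ) := by
  have hbR : (0:ℝ) < (b:ℝ) := by exact_mod_cast hb
  have hx : (x:ℝ)/(b:ℝ) = ((x / b : ℤ) : ℝ) + ((x % b : ℤ):ℝ)/(b:ℝ) := by
    field_simp
    rw [← Int.cast_mul, ← Int.cast_add]
    norm_cast
    rw [add_comm, mul_comm]
    linarith [Int.emod_add_mul_ediv x b]
  rw [hx, Int.fract_intCast_add, Int.fract_eq_self.mpr]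
  constructor
  · apply div_nonneg _ hbR.le
    exact_mod_cast Int.emod_nonneg x hb.ne'
  · rw [div_lt_one hbR]
    exact_mod_cast Int.emod_lt_of_pos x hb

lemma sum_Ico_quad0 (b : ℤ) (hb : 0 ≤ b) (c0 c1 c2 : ℝ) :
    ∑ j ∈ Finset.Ico (0:ℤ) b, (c0 + c1*(j:ℝ) + c2*(j:ℝ)^2)
      = c0*(b:ℝ) + c1*((b:ℝ)*(b-1)/2) + c2*((b:ℝ)*(b-1)*(2*b-1)/6) := by
  rw [Finset.sum_add_distrib, Finset.sum_add_distrib, ← Finset.mul_sum, ← Finset.mul_sum,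
    Finset.sum_const, sum_Ico_id b hb, sum_Ico_sq b hb, Int.card_Ico, nsmul_eq_mul]
  have h1 : (((b - 0).toNat:ℕ):ℝ) = (b:ℝ) := by
    rw [sub_zero]; exact_mod_cast Int.toNat_of_nonneg hb
  rw [h1]; ring

lemma sum_Ico_quad (a b : ℤ) (h0 : 0 ≤ a) (hab : a ≤ b) (c0 c1 c2 : ℝ) :
    ∑ j ∈ Finset.Ico a b, (c0 + c1*(j:ℝ) + c2*(j:ℝ)^2)
      = (c0*(b:ℝ) + c1*((b:ℝ)*(b-1)/2) + c2*((b:ℝ)*(b-1)*(2*b-1)/6))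
        - (c0*(a:ℝ) + c1*((a:ℝ)*(a-1)/2) + c2*((a:ℝ)*(a-1)*(2*a-1)/6)) := by
  have := sum_Ico_split 0 a b h0 hab (fun j => c0 + c1*(j:ℝ) + c2*(j:ℝ)^2)
  rw [sum_Ico_quad0 a h0, sum_Ico_quad0 b (le_trans h0 hab)] at this
  linarith

lemma inner_eval (m n t i : ℤ) (hn : 0 < n) (ht : 0 < t)
    (hcong : t*((m*i)%n) + i ≡ m*m*i [ZMOD n]) (hi0 : 0 ≤ i) (hin : i < n) :
    ∑ j ∈ Finset.Ico (0:ℤ) t, ((i+n*j : ℤ):ℝ) * ((((m*t+1)*(i+n*j)) % (n*t) : ℤ):ℝ)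
      = (t:ℝ)^2*((i:ℝ)*(((m*i)%n :ℤ):ℝ) - (((m*i)%n:ℤ):ℝ)*(((m*m*i)%n:ℤ):ℝ))
        + (t:ℝ)/2*(i:ℝ)^2 - (n:ℝ)*(t:ℝ)/2*(i:ℝ)
        + (t:ℝ)^3/2*(((m*i)%n:ℤ):ℝ)^2 - (n:ℝ)*(t:ℝ)^3/2*(((m*i)%n:ℤ):ℝ)
        + (t:ℝ)/2*(((m*m*i)%n:ℤ):ℝ)^2 + ((n:ℝ)*(t:ℝ)^2 - (n:ℝ)*(t:ℝ)/2)*(((m*m*i)%n:ℤ):ℝ)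
        + (n:ℝ)^2*((t:ℝ)/6 - (t:ℝ)^2/2 + (t:ℝ)^3/3) := by
  set r := (m*i) % n with hr_def
  set s := (m*m*i) % n with hs_def
  set f := (t*r + i) / n with hf_def
  have hr0 : 0 ≤ r := Int.emod_nonneg _ hn.ne'
  have hrn : r < n := Int.emod_lt_of_pos _ hn
  have hs0 : 0 ≤ s := Int.emod_nonneg _ hn.ne'
  have hsn : s < n := Int.emod_lt_of_pos _ hn
  have hmodeq : (t*r + i) % n = s := hcong.eq
  have hnf : n*f + s = t*r + i := by
    rw [← hmodeq, hf_def]; exact Int.mul_ediv_add_emod _ _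
  have hf0 : 0 ≤ f := Int.ediv_nonneg (by nlinarith) hn.le
  have hft : f ≤ t := by
    have h1 : n*f < n*(t+1) := by nlinarith
    have := lt_of_mul_lt_mul_left h1 hn.le
    omega
  have hmod : ∀ j : ℤ, ((m*t+1)*(i+n*j)) % (n*t) = (t*r + (i+n*j)) % (n*t) := by
    intro j
    have hq := Int.mul_ediv_add_emod (m*(i+n*j)) n
    have hr' : (m*(i+n*j)) % n = r := by
      rw [hr_def, show m*(i+n*j) = m*i + n*(m*j) from by ring]
      exact Int.add_mul_emod_self_left (m*i) n (m*j)
    rw [hr'] at hq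
    have key : (m*t+1)*(i+n*j) = (t*r + (i+n*j)) + (n*t)*(m*(i+n*j)/n) := by
      linear_combination t * hq.symm
    rw [key, Int.add_mul_emod_self_left]
  rw [sum_Ico_split 0 (t-f) t (by omega) (by omega)]
  have part1 : ∑ j ∈ Finset.Ico (0:ℤ) (t-f), ((i+n*j : ℤ):ℝ) * ((((m*t+1)*(i+n*j)) % (n*t) : ℤ):ℝ)
      = ∑ j ∈ Finset.Ico (0:ℤ) (t-f), (((i:ℝ)*((t:ℝ)*r+i)) + ((n:ℝ)*i + (n:ℝ)*((t:ℝ)*r+i))*(j:ℝ)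
          + ((n:ℝ)^2)*(j:ℝ)^2) := by
    refine Finset.sum_congr rfl ?_
    intro j hj
    simp only [Finset.mem_Ico] at hj
    rw [hmod j, Int.emod_eq_of_lt (by nlinarith) (by nlinarith)]
    push_cast
    ring
  have part2 : ∑ j ∈ Finset.Ico (t-f) t, ((i+n*j : ℤ):ℝ) * ((((m*t+1)*(i+n*j)) % (n*t) : ℤ):ℝ)
      = ∑ j ∈ Finset.Ico (t-f) t, (((i:ℝ)*((t:ℝ)*r+i-(n:ℝ)*t)) + ((n:ℝ)*i + (n:ℝ)*((t:ℝ)*r+i-(n:ℝ)*t))*(j:ℝ)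
          + ((n:ℝ)^2)*(j:ℝ)^2) := by
    refine Finset.sum_congr rfl ?_
    intro j hj
    simp only [Finset.mem_Ico] at hj
    have e0 : (t*r + (i+n*j)) % (n*t) = (t*r + (i+n*j) - n*t) % (n*t) := by
      rw [show t*r + (i+n*j) - n*t = (t*r + (i+n*j)) + (n*t)*(-1) from by ring,
        Int.add_mul_emod_self_left (t*r + (i+n*j)) (n*t) (-1)]
    have e1 : (t*r + (i+n*j)) % (n*t) = t*r + (i+n*j) - n*t := by
      rw [e0]
      exact Int.emod_eq_of_lt (by nlinarith) (by nlinarith)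
    rw [hmod j, e1]
    push_cast
    ring
  rw [part1, part2, sum_Ico_quad0 (t-f) (by omega), sum_Ico_quad (t-f) t (by omega) (by omega)]
  have hsR : (s:ℝ) = (t:ℝ)*r + i - (n:ℝ)*f := by
    have : ((n*f + s : ℤ):ℝ) = ((t*r + i : ℤ):ℝ) := by rw [hnf]
    push_cast at this
    linarith
  rw [hsR]
  push_cast
  ring

lemma T_value (m mstar n t : ℤ) (hn : 0 < n) (ht : 0 < t)
    (hinv : m * mstar ≡ 1 [ZMOD n]) (hcong : t*m + 1 ≡ m*m [ZMOD n]) :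
    ∑ k ∈ Finset.Ico (0:ℤ) (n*t), (k:ℝ) * ((((m*t+1)*k) % (n*t) : ℤ):ℝ)
      = ((t:ℝ) + (t:ℝ)^3/2) * ((n:ℝ)*(n-1)*(2*n-1)/6)
        + ((n:ℝ)*(t:ℝ)^2 - (n:ℝ)*(t:ℝ) - (n:ℝ)*(t:ℝ)^3/2) * ((n:ℝ)*(n-1)/2)
        + (n:ℝ)^3*((t:ℝ)/6 - (t:ℝ)^2/2 + (t:ℝ)^3/3) := by
  have hn' : n ≠ 0 := hn.ne'
  -- reindex
  have reindex : ∑ k ∈ Finset.Ico (0:ℤ) (n*t), (k:ℝ) * ((((m*t+1)*k) % (n*t) : ℤ):ℝ)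
      = ∑ p ∈ (Finset.Ico (0:ℤ) n) ×ˢ (Finset.Ico (0:ℤ) t),
          ((p.1 + n*p.2 : ℤ):ℝ) * ((((m*t+1)*(p.1+n*p.2)) % (n*t) : ℤ):ℝ) := by
    refine Finset.sum_nbij' (fun k => (k % n, k / n)) (fun p => p.1 + n*p.2) ?_ ?_ ?_ ?_ ?_
    · intro k hk
      simp only [Finset.mem_Ico, Finset.mem_product] at *
      refine ⟨⟨Int.emod_nonneg _ hn', Int.emod_lt_of_pos _ hn⟩,
        ⟨Int.ediv_nonneg hk.1 hn.le, ?_⟩⟩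
      rw [Int.ediv_lt_iff_lt_mul hn]
      linarith [hk.2]
    · intro p hp
      simp only [Finset.mem_Ico, Finset.mem_product] at *
      constructor
      · nlinarith [hp.1.1, hp.2.1]
      · nlinarith [hp.1.1, hp.1.2, hp.2.1, hp.2.2]
    · intro k _
      exact Int.emod_add_mul_ediv k n
    · intro p hp
      simp only [Finset.mem_Ico, Finset.mem_product] at hp
      have h1 : (p.1 + n*p.2) % n = p.1 := by
        rw [Int.add_mul_emod_self_left p.1 n p.2, Int.emod_eq_of_lt hp.1.1 hp.1.2]
      have h2 : (p.1 + n*p.2) / n = p.2 := by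
        rw [Int.add_mul_ediv_left p.1 p.2 hn', Int.ediv_eq_zero_of_lt hp.1.1 hp.1.2, zero_add]
      exact Prod.ext h1 h2
    · intro k _
      rw [Int.emod_add_mul_ediv k n]
  rw [reindex, Finset.sum_product]
  -- evaluate inner sums
  have hinner : ∀ i ∈ Finset.Ico (0:ℤ) n,
      ∑ j ∈ Finset.Ico (0:ℤ) t, ((i + n*j : ℤ):ℝ) * ((((m*t+1)*(i+n*j)) % (n*t) : ℤ):ℝ)
      = (t:ℝ)^2*((i:ℝ)*(((m*i)%n :ℤ):ℝ)) - (t:ℝ)^2*((((m*i)%n:ℤ):ℝ)*(((m*m*i)%n:ℤ):ℝ))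
        + ((t:ℝ)/2)*((i:ℝ)^2) - ((n:ℝ)*(t:ℝ)/2)*(i:ℝ)
        + ((t:ℝ)^3/2)*((((m*i)%n:ℤ):ℝ)^2) - ((n:ℝ)*(t:ℝ)^3/2)*((((m*i)%n:ℤ):ℝ)
          ) + ((t:ℝ)/2)*((((m*m*i)%n:ℤ):ℝ)^2) + ((n:ℝ)*(t:ℝ)^2 - (n:ℝ)*(t:ℝ)/2)*((((m*m*i)%n:ℤ):ℝ))
        + (n:ℝ)^2*((t:ℝ)/6 - (t:ℝ)^2/2 + (t:ℝ)^3/3) := by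
    intro i hi
    simp only [Finset.mem_Ico] at hi
    have hc : t*((m*i)%n) + i ≡ m*m*i [ZMOD n] := by
      have h1 : t*((m*i)%n) + i ≡ t*(m*i) + i [ZMOD n] :=
        (Int.ModEq.mul_left t (Int.mod_modEq _ _)).add_right i
      have h4 : t*(m*i) + i ≡ m*m*i [ZMOD n] := by
        have h3 : (t*m+1)*i ≡ (m*m)*i [ZMOD n] := hcong.mul_right i
        have h2 : t*(m*i) + i = (t*m+1)*i := by ring
        rw [h2]; exact h3
      exact h1.trans h4
    rw [inner_eval m n t i hn ht hc hi.1 hi.2]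
    ring
  rw [Finset.sum_congr rfl hinner]
  simp only [Finset.sum_add_distrib, Finset.sum_sub_distrib, ← Finset.mul_sum, Finset.sum_const,
    Int.card_Ico, nsmul_eq_mul]
  -- permutation sum values
  have hSr : ∑ i ∈ Finset.Ico (0:ℤ) n, (((m*i)%n:ℤ):ℝ) = (n:ℝ)*(n-1)/2 := by
    rw [sum_emod_perm hn m mstar hinv (fun x => (x:ℝ)), sum_Ico_id n hn.le]
  have hSr2 : ∑ i ∈ Finset.Ico (0:ℤ) n, (((m*i)%n:ℤ):ℝ)^2 = (n:ℝ)*(n-1)*(2*n-1)/6 := by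
    rw [sum_emod_perm hn m mstar hinv (fun x => (x:ℝ)^2), sum_Ico_sq n hn.le]
  have hmm : (m*m) * (mstar*mstar) ≡ 1 [ZMOD n] := by
    have := hinv.mul hinv
    rw [mul_one] at this
    rw [show (m*m)*(mstar*mstar) = (m*mstar)*(m*mstar) from by ring]
    exact this
  have hSs : ∑ i ∈ Finset.Ico (0:ℤ) n, (((m*m*i)%n:ℤ):ℝ) = (n:ℝ)*(n-1)/2 := by
    rw [sum_emod_perm hn (m*m) (mstar*mstar) hmm (fun x => (x:ℝ)), sum_Ico_id n hn.le]
  have hSs2 : ∑ i ∈ Finset.Ico (0:ℤ) n, (((m*m*i)%n:ℤ):ℝ)^2 = (n:ℝ)*(n-1)*(2*n-1)/6 := by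
    rw [sum_emod_perm hn (m*m) (mstar*mstar) hmm (fun x => (x:ℝ)^2), sum_Ico_sq n hn.le]
  have hSi : ∑ i ∈ Finset.Ico (0:ℤ) n, (i:ℝ) = (n:ℝ)*(n-1)/2 := sum_Ico_id n hn.le
  have hSi2 : ∑ i ∈ Finset.Ico (0:ℤ) n, (i:ℝ)^2 = (n:ℝ)*(n-1)*(2*n-1)/6 := sum_Ico_sq n hn.le
  have hSrs : ∑ i ∈ Finset.Ico (0:ℤ) n, (((m*i)%n:ℤ):ℝ)*(((m*m*i)%n:ℤ):ℝ)
      = ∑ i ∈ Finset.Ico (0:ℤ) n, (i:ℝ)*(((m*i)%n:ℤ):ℝ) := by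
    have hperm := sum_emod_perm hn mstar m (by rwa [mul_comm] at hinv)
      (fun x => (((m*x)%n:ℤ):ℝ)*(((m*m*x)%n:ℤ):ℝ))
    rw [← hperm]
    refine Finset.sum_congr rfl ?_
    intro i hi
    simp only [Finset.mem_Ico] at hi
    have e1 : (m*((mstar*i)%n))%n = i := by
      have h1 : m*((mstar*i)%n) ≡ m*(mstar*i) [ZMOD n] := Int.ModEq.mul_left m (Int.mod_modEq _ _)
      have h2 : m*(mstar*i) ≡ i [ZMOD n] := by
        have h3 : (m*mstar)*i ≡ 1*i [ZMOD n] := hinv.mul_right i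
        rw [one_mul] at h3
        rw [show m*(mstar*i) = (m*mstar)*i from by ring]
        exact h3
      have := (h1.trans h2).eq
      rw [this, Int.emod_eq_of_lt hi.1 hi.2]
    have e2 : (m*m*((mstar*i)%n))%n = (m*i)%n := by
      have h1 : m*m*((mstar*i)%n) ≡ m*m*(mstar*i) [ZMOD n] :=
        Int.ModEq.mul_left (m*m) (Int.mod_modEq _ _)
      have h2 : m*m*(mstar*i) ≡ m*i [ZMOD n] := by
        have h3 : (m*mstar)*(m*i) ≡ 1*(m*i) [ZMOD n] := hinv.mul_right (m*i)
        rw [one_mul] at h3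
        rw [show m*m*(mstar*i) = (m*mstar)*(m*i) from by ring]
        exact h3
      exact h1.trans h2
    rw [e1, e2]
  rw [hSr, hSr2, hSs, hSs2, hSi, hSi2, hSrs]
  have hcast : (((n - 0).toNat:ℕ):ℝ) = (n:ℝ) := by
    rw [sub_zero]; exact_mod_cast Int.toNat_of_nonneg hn.le
  rw [hcast]
  ring




lemma saw_zero : saw 0 = 0 := by simp [saw]

lemma twelve_ded (a b : ℤ) (hb : 0 < b) (hab : IsCoprime a b) :
    12 * dedekindSum a b
      = 12 * (∑ k ∈ Finset.Ico (0:ℤ) b, (k:ℝ) * (((a*k) % b : ℤ):ℝ)) / (b:ℝ)^2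
        - 3*((b:ℝ)-1) := by
  have hbR : (0:ℝ) < (b:ℝ) := by exact_mod_cast hb
  have hb0 : (b:ℝ) ≠ 0 := hbR.ne'
  set g : ℕ → ℝ := fun k => saw ((k : ℝ) / (b : ℝ)) * saw ((a : ℝ) * (k : ℝ) / (b : ℝ)) with hg
  set G : ℤ → ℝ := fun k => saw ((k : ℝ) / (b : ℝ)) * saw ((a : ℝ) * (k : ℝ) / (b : ℝ)) with hG
  have hN : 0 < b.toNat := by omega
  have hNb : ((b.toNat:ℕ):ℝ) = (b:ℝ) := by exact_mod_cast Int.toNat_of_nonneg hb.le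
  have hg0 : g 0 = 0 := by simp [hg, saw_zero]
  have hgN : g b.toNat = 0 := by
    have : ((b.toNat:ℕ):ℝ)/(b:ℝ) = 1 := by rw [hNb]; field_simp
    simp only [hg, this]
    have : saw 1 = 0 := by simp [saw, Int.fract_one]
    rw [this, zero_mul]
  -- dedekindSum as sum over range b.toNat
  have step1 : dedekindSum a b = ∑ k ∈ range b.toNat, g k := by
    have e1 : ∑ k ∈ range (b.toNat+1), g k = ∑ k ∈ range b.toNat, g k + g b.toNat :=
      Finset.sum_range_succ g b.toNat
    have e2 : ∑ k ∈ range (b.toNat+1), g k = g 0 + ∑ k ∈ Finset.Icc 1 b.toNat, g k := by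
      rw [Finset.range_eq_Ico, Finset.sum_eq_sum_Ico_succ_bot (by omega) g,
        Finset.Ico_add_one_right_eq_Icc]
    have : dedekindSum a b = ∑ k ∈ Finset.Icc 1 b.toNat, g k := rfl
    rw [this]
    rw [e1, hgN, add_zero, hg0, zero_add] at e2
    exact e2.symm
  have step2 : dedekindSum a b = ∑ k ∈ Finset.Ico (0:ℤ) b, G k := by
    rw [step1, sum_Ico_int b G]
    refine Finset.sum_congr rfl ?_
    intro k _
    simp only [hg, hG, Int.cast_natCast]
  -- remove the k = 0 term
  have hIco01 : Finset.Ico (0:ℤ) 1 = {0} := by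
    ext x; simp only [Finset.mem_Ico, Finset.mem_singleton]; omega
  have step3 : dedekindSum a b = ∑ k ∈ Finset.Ico (1:ℤ) b, G k := by
    rw [step2, sum_Ico_split 0 1 b (by omega) (by omega) G, hIco01, Finset.sum_singleton]
    have : G 0 = 0 := by simp [hG, saw_zero]
    rw [this, zero_add]
  -- pointwise formula on Ico 1 b
  have hpt : ∀ k ∈ Finset.Ico (1:ℤ) b,
      G k = (1/(b:ℝ)^2)*((k:ℝ)*(((a*k % b : ℤ):ℝ))) + (-1/(2*(b:ℝ)))*(k:ℝ)
        + (-1/(2*(b:ℝ)))*(((a*k % b : ℤ):ℝ)) + 1/4 := by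
    intro k hk
    simp only [Finset.mem_Ico] at hk
    have hk0 : (0:ℝ) < (k:ℝ) := by exact_mod_cast hk.1
    have hkb : (k:ℝ) < (b:ℝ) := by exact_mod_cast hk.2
    have s1 : saw ((k:ℝ)/(b:ℝ)) = (k:ℝ)/(b:ℝ) - 1/2 := by
      have hfr : Int.fract ((k:ℝ)/(b:ℝ)) = (k:ℝ)/(b:ℝ) :=
        Int.fract_eq_self.mpr ⟨by positivity, by rw [div_lt_one hbR]; exact hkb⟩
      rw [saw, hfr, if_neg (by positivity)]
    have hmodne : (a*k) % b ≠ 0 := by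
      intro h0
      have hdvd : b ∣ a*k := Int.dvd_of_emod_eq_zero h0
      have : b ∣ k := (hab.symm).dvd_of_dvd_mul_left hdvd
      have := Int.le_of_dvd (by omega) this
      omega
    have s2 : saw ((a:ℝ)*(k:ℝ)/(b:ℝ)) = ((a*k % b : ℤ):ℝ)/(b:ℝ) - 1/2 := by
      have hax : (a:ℝ)*(k:ℝ) = ((a*k : ℤ):ℝ) := by push_cast; ring
      have hfr : Int.fract ((a:ℝ)*(k:ℝ)/(b:ℝ)) = ((a*k % b : ℤ):ℝ)/(b:ℝ) := by
        rw [hax, fract_intCast_div (a*k) b hb]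
      have hne : ((a*k % b : ℤ):ℝ)/(b:ℝ) ≠ 0 := by
        apply div_ne_zero _ hb0
        exact_mod_cast hmodne
      rw [saw, hfr, if_neg hne]
    simp only [hG]
    rw [s1, s2]
    field_simp
    ring
  rw [step3, Finset.sum_congr rfl hpt]
  simp only [Finset.sum_add_distrib, ← Finset.mul_sum, Finset.sum_const, Int.card_Ico,
    nsmul_eq_mul]
  -- sum values
  have hzero_term : (0:ℝ) * (((a*0 % b : ℤ):ℝ)) = 0 := by simp
  have hSk : ∑ k ∈ Finset.Ico (1:ℤ) b, (k:ℝ) = (b:ℝ)*((b:ℝ)-1)/2 := by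
    have := sum_Ico_split 0 1 b (by omega) (by omega) (fun k => (k:ℝ))
    rw [sum_Ico_id b hb.le, hIco01, Finset.sum_singleton] at this
    simp only [Int.cast_zero] at this
    linarith
  have hainv : ∃ a' : ℤ, a * a' ≡ 1 [ZMOD b] := by
    obtain ⟨u, v, huv⟩ := hab
    exact ⟨u, Int.modEq_iff_dvd.mpr ⟨v, by linarith⟩⟩
  obtain ⟨a', ha'⟩ := hainv
  have hSw : ∑ k ∈ Finset.Ico (1:ℤ) b, (((a*k % b : ℤ):ℝ)) = (b:ℝ)*((b:ℝ)-1)/2 := by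
    have hfull : ∑ k ∈ Finset.Ico (0:ℤ) b, (((a*k % b : ℤ):ℝ)) = (b:ℝ)*((b:ℝ)-1)/2 := by
      rw [sum_emod_perm hb a a' ha' (fun x => (x:ℝ)), sum_Ico_id b hb.le]
    have := sum_Ico_split 0 1 b (by omega) (by omega) (fun k => (((a*k % b : ℤ):ℝ)))
    rw [hfull, hIco01, Finset.sum_singleton] at this
    simp only [mul_zero, Int.zero_emod, Int.cast_zero] at this
    linarith
  have hST : ∑ k ∈ Finset.Ico (1:ℤ) b, (k:ℝ)*(((a*k % b : ℤ):ℝ))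
      = ∑ k ∈ Finset.Ico (0:ℤ) b, (k:ℝ)*(((a*k % b : ℤ):ℝ)) := by
    have := sum_Ico_split 0 1 b (by omega) (by omega) (fun k => (k:ℝ)*(((a*k % b : ℤ):ℝ)))
    rw [hIco01, Finset.sum_singleton] at this
    simp only [Int.cast_zero, zero_mul] at this
    linarith
  rw [hSk, hSw, hST]
  have hcard : (((b - 1).toNat:ℕ):ℝ) = (b:ℝ) - 1 := by
    have : ((b-1).toNat : ℤ) = b - 1 := Int.toNat_of_nonneg (by omega)
    exact_mod_cast this
  rw [hcard]
  field_simp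
  ring

theorem dedekindSum_formula (m mstar n : ℤ) (hn : 0 < n) (h : Int.gcd m n = 1)
    (hinv : m * mstar ≡ 1 [ZMOD n]) (hlt : mstar < m) :
    12 * dedekindSum (m * (m - mstar) + 1) (n * (m - mstar)) =
      -3 + 2 / ((n : ℝ) * ((m : ℝ) - (mstar : ℝ))) + ((m : ℝ) - (mstar : ℝ)) / (n : ℝ) := by
  set t := m - mstar with htdef
  have ht : 0 < t := by omega
  have hb : 0 < n * t := by positivity
  have hmn : IsCoprime m n := Int.isCoprime_iff_gcd_eq_one.mpr h
  obtain ⟨c, hc⟩ : n ∣ 1 - m * mstar := Int.ModEq.dvd hinv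
  have c2 : IsCoprime (m * t + 1) n := by
    have h1 : IsCoprime (m * m) n := hmn.mul_left hmn
    have h2 : IsCoprime (m * m + n * c) n := h1.add_mul_left_left c
    have h3 : m * t + 1 = m * m + n * c := by rw [htdef]; linarith
    rwa [h3]
  have c1 : IsCoprime (m * t + 1) t := ⟨1, -m, by ring⟩
  have hab : IsCoprime (m * t + 1) (n * t) := c2.mul_right c1
  have hcong : t * m + 1 ≡ m * m [ZMOD n] := by
    rw [Int.modEq_iff_dvd]
    exact ⟨-c, by rw [htdef]; linarith⟩
  rw [twelve_ded (m * t + 1) (n * t) hb hab,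
    T_value m mstar n t hn ht hinv hcong]
  have htR : ((m:ℝ) - (mstar:ℝ)) = (t:ℝ) := by rw [htdef]; push_cast; ring
  rw [htR]
  have hnR : ((n:ℝ)) ≠ 0 := by positivity
  have htR0 : ((t:ℝ)) ≠ 0 := by
    have : (0:ℝ) < (t:ℝ) := by exact_mod_cast ht
    exact this.ne'
  push_cast
  field_simp
  ring
end

section
/- Let j, k, m be integers with 0 < j ≤ k, gcd(j,k) = 1, and mj ≡ 1 (mod k). Set n = k(m² + 1). Then k divides jn, the number -m + jn/k is an integer, and m·(-m + jn/k) ≡ 1 (mod n); that is, -m + jn/k is a multiplicative inverse of m modulo n. -/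
theorem inverse_mod (j k m : ℤ) (hj : 0 < j) (hjk : j ≤ k) (hgcd : Int.gcd j k = 1)
    (hmj : m * j ≡ 1 [ZMOD k]) :
    k ∣ j * (k * (m ^ 2 + 1)) ∧
      m * (-m + j * (k * (m ^ 2 + 1)) / k) ≡ 1 [ZMOD (k * (m ^ 2 + 1))] := by
  have hk : k ≠ 0 := ne_of_gt (lt_of_lt_of_le hj hjk)
  have hdvd : k ∣ j * (k * (m ^ 2 + 1)) := ⟨j * (m ^ 2 + 1), by ring⟩
  refine ⟨hdvd, ?_⟩
  have hdiv : j * (k * (m ^ 2 + 1)) / k = j * (m ^ 2 + 1) := by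
    rw [show j * (k * (m ^ 2 + 1)) = k * (j * (m ^ 2 + 1)) by ring,
      Int.mul_ediv_cancel_left _ hk]
  rw [hdiv]
  have h1 : k ∣ m * j - 1 := Int.ModEq.dvd hmj.symm
  obtain ⟨c, hc⟩ := h1
  have : m * (-m + j * (m ^ 2 + 1)) - 1 = k * (m ^ 2 + 1) * c := by
    have : m * j - 1 = k * c := hc
    nlinarith [this]
  exact Int.ModEq.symm (Int.modEq_iff_dvd.mpr ⟨c, this⟩)
end

section
/- Every rational number x ≥ -3 is a limit of values 12·s(a,b): for every ε > 0 there exist a positive integer b and an integer a with gcd(a,b) = 1 such that |x - 12·s(a,b)| < ε. -/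
namespace DSaux

lemma saw_add_nat (x : ℝ) (n : ℕ) : saw (x + n) = saw x := by
  unfold saw
  rw [Int.fract_add_natCast]

lemma saw_nat (n : ℕ) : saw n = 0 := by
  unfold saw
  rw [show ((n:ℝ)) = ((n:ℤ):ℝ) by push_cast; ring, Int.fract_intCast]
  simp

lemma saw_frac (r k : ℕ) (h1 : 1 ≤ r) (h2 : r < k) : saw ((r:ℝ)/k) = (r:ℝ)/k - 1/2 := by
  have hk : (0:ℝ) < k := by exact_mod_cast (by omega : 0 < k)
  have hfr : Int.fract ((r:ℝ)/k) = (r:ℝ)/k := by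
    apply Int.fract_eq_self.mpr
    constructor
    · positivity
    · rw [div_lt_one hk]; exact_mod_cast h2
  unfold saw
  rw [hfr]
  have : (r:ℝ)/k ≠ 0 := by
    apply div_ne_zero
    · exact_mod_cast Nat.one_le_iff_ne_zero.mp h1
    · exact ne_of_gt hk
  simp [this]

lemma gauss1 (n : ℕ) : 2 * ∑ r ∈ Finset.Icc 1 n, (r:ℤ) = n*(n+1) := by
  induction n with
  | zero => simp
  | succ m ih =>
      rw [Finset.sum_Icc_succ_top (by omega : 1 ≤ m+1)]
      push_cast
      push_cast at ih
      ring_nf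
      ring_nf at ih
      linarith

lemma gauss2 (n : ℕ) : 6 * ∑ r ∈ Finset.Icc 1 n, (r:ℤ)^2 = n*(n+1)*(2*n+1) := by
  induction n with
  | zero => simp
  | succ m ih =>
      rw [Finset.sum_Icc_succ_top (by omega : 1 ≤ m+1)]
      push_cast
      push_cast at ih
      ring_nf
      ring_nf at ih
      linarith

/-- r ↦ h*r % k permutes Icc 1 (k-1). -/
lemma sum_mod_perm (h k : ℕ) (co : Nat.Coprime h k) (f : ℕ → ℤ) :
    ∑ r ∈ Finset.Icc 1 (k-1), f ((h*r) % k) = ∑ r ∈ Finset.Icc 1 (k-1), f r := by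
  rcases Nat.eq_zero_or_pos k with rfl | hk
  · simp
  set s : Finset ℕ := Finset.Icc 1 (k-1) with hs
  have hmem : ∀ r, r ∈ s ↔ 1 ≤ r ∧ r ≤ k - 1 := by
    intro r; simp [hs]
  have hmaps : ∀ r ∈ s, (h*r) % k ∈ s := by
    intro r hr
    rw [hmem] at hr ⊢
    have hlt : (h*r) % k < k := Nat.mod_lt _ hk
    have hne : (h*r) % k ≠ 0 := by
      intro h0
      have hdvd : k ∣ h * r := Nat.dvd_of_mod_eq_zero h0
      have : k ∣ r := (Nat.Coprime.dvd_of_dvd_mul_left (Nat.coprime_comm.mp co) hdvd)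
      have := Nat.le_of_dvd (by omega) this
      omega
    omega
  have hinj : Set.InjOn (fun r => (h*r) % k) s := by
    intro r hr r' hr' heq
    simp only at heq
    rw [Finset.mem_coe, hmem] at hr hr'
    have hmod : h * r ≡ h * r' [MOD k] := by
      unfold Nat.ModEq; omega
    have := (Nat.ModEq.cancel_left_of_coprime (by rwa [Nat.coprime_comm] at co) hmod)
    unfold Nat.ModEq at this
    have hrk : r % k = r := Nat.mod_eq_of_lt (by omega)
    have hrk' : r' % k = r' := Nat.mod_eq_of_lt (by omega)
    omega
  have himg : s.image (fun r => (h*r) % k) = s := by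
    apply Finset.eq_of_subset_of_card_le
    · intro y hy
      rcases Finset.mem_image.mp hy with ⟨r, hr, rfl⟩
      exact hmaps r hr
    · rw [Finset.card_image_of_injOn hinj]
  conv_rhs => rw [← himg]
  rw [Finset.sum_image (by intro a ha b hb hab; exact hinj ha hb hab)]

/-- counting: #{s ∈ [1,h-1] : k s < h r} = ⌊hr/k⌋ for 1 ≤ r ≤ k-1, coprime. -/
lemma count_lt (h k : ℕ) (hh : 0 < h) (co : Nat.Coprime h k) (r : ℕ)
    (hr1 : 1 ≤ r) (hr2 : r ≤ k - 1) (hk2 : 2 ≤ k) :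
    ((Finset.Icc 1 (h-1)).filter (fun s => k*s < h*r)).card = (h*r)/k := by
  have hk : 0 < k := by omega
  have hc_le : (h*r)/k ≤ h - 1 := by
    have hrltk : r < k := by omega
    have hlt : h * r < k * h := by
      rw [mul_comm k h]
      exact mul_lt_mul_of_pos_left hrltk hh
    have : (h*r)/k < h := Nat.div_lt_of_lt_mul hlt
    omega
  have key : (Finset.Icc 1 (h-1)).filter (fun s => k*s < h*r) = Finset.Icc 1 ((h*r)/k) := by
    ext t
    simp only [Finset.mem_filter, Finset.mem_Icc]
    constructor
    · rintro ⟨⟨ht1, _⟩, hlt⟩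
      refine ⟨ht1, ?_⟩
      have e1 := Nat.div_add_mod (h*r) k
      have e2 : (h*r) % k < k := Nat.mod_lt _ hk
      have h3 : k * t < k * ((h*r)/k) + k := by omega
      have h4 : t < (h*r)/k + 1 := by
        by_contra hcon
        push_neg at hcon
        have h5 : k * ((h*r)/k + 1) ≤ k * t := Nat.mul_le_mul_left _ hcon
        rw [Nat.mul_succ] at h5
        omega
      omega
    · rintro ⟨ht1, ht2⟩
      refine ⟨⟨ht1, le_trans ht2 hc_le⟩, ?_⟩
      have hne : k * t ≠ h * r := by
        intro he
        have hdvd : k ∣ h * r := ⟨t, he.symm⟩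
        have : k ∣ r := Nat.Coprime.dvd_of_dvd_mul_left (Nat.coprime_comm.mp co) hdvd
        have := Nat.le_of_dvd (by omega) this
        omega
      have h5 : k * t ≤ k * ((h*r)/k) := Nat.mul_le_mul_left _ ht2
      have e1 := Nat.div_add_mod (h*r) k
      have h6 : k * t ≤ h * r := by omega
      exact lt_of_le_of_ne h6 hne
  rw [key, Nat.card_Icc]
  simp

end DSaux

namespace DSaux

open Finset

def Rz (h k : ℕ) : ℤ := ∑ r ∈ Finset.Icc 1 (k-1), (r:ℤ)*((h*r % k : ℕ):ℤ)
def Fz (h k : ℕ) : ℤ := ∑ r ∈ Finset.Icc 1 (k-1), (r:ℤ)*((h*r / k : ℕ):ℤ)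
def Cz (h k : ℕ) : ℤ := ∑ r ∈ Finset.Icc 1 (k-1), ((h*r / k : ℕ):ℤ)
def SQz (h k : ℕ) : ℤ := ∑ r ∈ Finset.Icc 1 (k-1), ((h*r / k : ℕ):ℤ)^2
def S1z (k : ℕ) : ℤ := ∑ r ∈ Finset.Icc 1 (k-1), (r:ℤ)
def S2z (k : ℕ) : ℤ := ∑ r ∈ Finset.Icc 1 (k-1), (r:ℤ)^2

lemma g1' (k : ℕ) (hk : 1 ≤ k) : 2*S1z k = ((k:ℤ)-1)*k := by
  have := gauss1 (k-1)
  unfold S1z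
  rw [this]
  have : ((k-1 : ℕ):ℤ) = (k:ℤ) - 1 := by
    push_cast [Nat.cast_sub hk]; ring
  rw [this]
  have h2 : ((k-1+1 : ℕ):ℤ) = (k:ℤ) := by
    have : k - 1 + 1 = k := by omega
    rw [this]
  push_cast at h2 ⊢
  linarith [h2]

lemma g2' (k : ℕ) (hk : 1 ≤ k) : 6*S2z k = ((k:ℤ)-1)*k*(2*k-1) := by
  have := gauss2 (k-1)
  unfold S2z
  rw [this]
  have e1 : ((k-1 : ℕ):ℤ) = (k:ℤ) - 1 := by push_cast [Nat.cast_sub hk]; ring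
  rw [e1]
  have e2 : ((k-1:ℕ):ℤ) + 1 = (k:ℤ) := by rw [e1]; ring
  rw [e1] at e2
  rw [show (2:ℤ)*((k:ℤ)-1)+1 = 2*(k:ℤ)-1 by ring]
  nlinarith [e2]

lemma sum_rho (h k : ℕ) (co : Nat.Coprime h k) :
    ∑ r ∈ Finset.Icc 1 (k-1), ((h*r % k : ℕ):ℤ) = S1z k :=
  sum_mod_perm h k co (fun x => (x:ℤ))

lemma sum_rho_sq (h k : ℕ) (co : Nat.Coprime h k) :
    ∑ r ∈ Finset.Icc 1 (k-1), ((h*r % k : ℕ):ℤ)^2 = S2z k :=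
  sum_mod_perm h k co (fun x => (x:ℤ)^2)

lemma lemA (h k : ℕ) (co : Nat.Coprime h k) (hk : 0 < k) :
    (k:ℤ)^2 * SQz h k = ((h:ℤ)^2+1)*S2z k - 2*h*Rz h k := by
  have hpt : ∀ r ∈ Finset.Icc 1 (k-1),
      (k:ℤ)^2*((h*r / k : ℕ):ℤ)^2
        = (h:ℤ)^2*(r:ℤ)^2 - 2*(h:ℤ)*((r:ℤ)*((h*r % k : ℕ):ℤ)) + ((h*r % k : ℕ):ℤ)^2 := by
    intro r hr
    have e : ((h*r : ℕ):ℤ) = (k:ℤ)*((h*r/k : ℕ):ℤ) + ((h*r % k : ℕ):ℤ) := by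
      exact_mod_cast (Nat.div_add_mod (h*r) k).symm
    have em : ((h*r:ℕ):ℤ) = (h:ℤ)*(r:ℤ) := by push_cast; ring
    have e2 : (k:ℤ)*((h*r/k : ℕ):ℤ) = (h:ℤ)*(r:ℤ) - ((h*r % k : ℕ):ℤ) := by
      linarith [e, em]
    calc (k:ℤ)^2*((h*r / k : ℕ):ℤ)^2 = ((k:ℤ)*((h*r/k : ℕ):ℤ))^2 := by ring
      _ = ((h:ℤ)*(r:ℤ) - ((h*r % k : ℕ):ℤ))^2 := by rw [e2]
      _ = _ := by ring
  unfold SQz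
  rw [Finset.mul_sum]
  rw [Finset.sum_congr rfl hpt]
  rw [Finset.sum_add_distrib, Finset.sum_sub_distrib, ← Finset.mul_sum, ← Finset.mul_sum]
  rw [sum_rho_sq h k co]
  unfold Rz S2z
  ring

lemma lemC (h k : ℕ) (hh : 0 < h) :
    (h:ℤ) * Fz k h = (k:ℤ)*S2z h - Rz k h := by
  have hpt : ∀ s ∈ Finset.Icc 1 (h-1),
      (h:ℤ) * ((s:ℤ)*((k*s / h : ℕ):ℤ))
        = (k:ℤ)*(s:ℤ)^2 - (s:ℤ)*((k*s % h : ℕ):ℤ) := by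
    intro s hs
    have e : ((k*s : ℕ):ℤ) = (h:ℤ)*((k*s/h : ℕ):ℤ) + ((k*s % h : ℕ):ℤ) := by
      exact_mod_cast (Nat.div_add_mod (k*s) h).symm
    push_cast at e ⊢
    nlinarith [e]
  unfold Fz
  rw [Finset.mul_sum]
  rw [Finset.sum_congr rfl hpt]
  rw [Finset.sum_sub_distrib, ← Finset.mul_sum]
  unfold Rz S2z
  ring

lemma lemD (h k : ℕ) (hh : 0 < h) (co : Nat.Coprime h k) :
    (h:ℤ) * Cz k h = ((k:ℤ)-1) * S1z h := by
  have hpt : ∀ s ∈ Finset.Icc 1 (h-1),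
      (h:ℤ) * ((k*s / h : ℕ):ℤ)
        = (k:ℤ)*(s:ℤ) - ((k*s % h : ℕ):ℤ) := by
    intro s hs
    have e : ((k*s : ℕ):ℤ) = (h:ℤ)*((k*s/h : ℕ):ℤ) + ((k*s % h : ℕ):ℤ) := by
      exact_mod_cast (Nat.div_add_mod (k*s) h).symm
    push_cast at e ⊢
    linarith [e]
  unfold Cz
  rw [Finset.mul_sum]
  rw [Finset.sum_congr rfl hpt]
  rw [Finset.sum_sub_distrib, ← Finset.mul_sum]
  rw [sum_rho k h (Nat.coprime_comm.mp co)]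
  unfold S1z
  ring

lemma sum_max_sq (n : ℕ) (g : ℕ → ℤ) :
    ∑ s ∈ Finset.Icc 1 n, ∑ t ∈ Finset.Icc 1 n, g (max s t)
      = ∑ t ∈ Finset.Icc 1 n, (2*(t:ℤ) - 1) * g t := by
  induction n with
  | zero => simp
  | succ m ih =>
    have h1 : (1:ℕ) ≤ m + 1 := by omega
    have inner : ∀ s ∈ Finset.Icc 1 (m+1),
        ∑ t ∈ Finset.Icc 1 (m+1), g (max s t)
          = (∑ t ∈ Finset.Icc 1 m, g (max s t)) + g (max s (m+1)) :=
      fun s _ => Finset.sum_Icc_succ_top h1 _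
    rw [Finset.sum_congr rfl inner, Finset.sum_add_distrib]
    rw [Finset.sum_Icc_succ_top h1 (fun s => ∑ t ∈ Finset.Icc 1 m, g (max s t))]
    rw [ih]
    have e2 : ∑ t ∈ Finset.Icc 1 m, g (max (m+1) t)
        = m * g (m+1) := by
      rw [Finset.sum_congr rfl (fun t ht => by
        rw [max_eq_left (by simp at ht; omega : t ≤ m+1)])]
      rw [Finset.sum_const, Nat.card_Icc]
      simp
    have e3 : ∑ s ∈ Finset.Icc 1 (m+1), g (max s (m+1))
        = (m+1) * g (m+1) := by
      rw [Finset.sum_congr rfl (fun s hs => by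
        rw [max_eq_right (by simp at hs; omega : s ≤ m+1)])]
      rw [Finset.sum_const, Nat.card_Icc]
      simp
    rw [e2, e3, Finset.sum_Icc_succ_top h1 (fun t => (2*(t:ℤ)-1)*g t)]
    push_cast
    ring

end DSaux

namespace DSaux

lemma hcount2 (h k : ℕ) (hh : 0 < h) (hk : 0 < k) (co : Nat.Coprime h k)
    (t : ℕ) (ht1 : 1 ≤ t) (ht2 : t ≤ h - 1) :
    ∑ r ∈ Finset.Icc 1 (k-1), (if k*t < h*r then (1:ℤ) else 0)
      = ((k:ℤ)-1) - ((k*t/h : ℕ):ℤ) := by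
  have hh2 : 2 ≤ h := by omega
  have hne : ∀ r ∈ Finset.Icc 1 (k-1), h*r ≠ k*t := by
    intro r hr he
    have hdvd : h ∣ k * t := ⟨r, he.symm⟩
    have : h ∣ t := Nat.Coprime.dvd_of_dvd_mul_left co hdvd
    have := Nat.le_of_dvd (by omega) this
    omega
  have hcompl := Finset.card_filter_add_card_filter_not
    (s := Finset.Icc 1 (k-1)) (p := fun r => k*t < h*r)
  have hfneg : (Finset.Icc 1 (k-1)).filter (fun r => ¬ (k*t < h*r))
      = (Finset.Icc 1 (k-1)).filter (fun r => h*r < k*t) := by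
    apply Finset.filter_congr
    intro r hr
    constructor
    · intro hle
      exact lt_of_le_of_ne (not_lt.mp hle) (hne r hr)
    · intro hlt
      simp only [not_lt]
      exact le_of_lt hlt
  have hcc : ((Finset.Icc 1 (k-1)).filter (fun r => h*r < k*t)).card = (k*t)/h :=
    count_lt k h hk (Nat.coprime_comm.mp co) t ht1 ht2 hh2
  rw [hfneg, hcc, Nat.card_Icc] at hcompl
  have hle : (k*t)/h ≤ k - 1 := by omega
  have hcardp : ((Finset.Icc 1 (k-1)).filter (fun r => k*t < h*r)).card
      = (k - 1) - (k*t)/h := by omega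
  have hsum : ∑ r ∈ Finset.Icc 1 (k-1), (if k*t < h*r then (1:ℤ) else 0)
      = (((Finset.Icc 1 (k-1)).filter (fun r => k*t < h*r)).card : ℤ) := by
    rw [Finset.card_filter]
    push_cast
    rfl
  rw [hsum, hcardp]
  have hk1 : 1 ≤ k := hk
  push_cast [Nat.cast_sub hle, Nat.cast_sub hk1]
  ring

lemma lemB (h k : ℕ) (hh : 0 < h) (hk : 0 < k) (co : Nat.Coprime h k) :
    SQz h k = 2*((k:ℤ)-1)*S1z h - ((k:ℤ)-1)*((h:ℤ)-1) - 2*Fz k h + Cz k h := by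
  have hcard : ∀ r ∈ Finset.Icc 1 (k-1),
      ((h*r/k : ℕ):ℤ) = ∑ s ∈ Finset.Icc 1 (h-1), (if k*s < h*r then (1:ℤ) else 0) := by
    intro r hr
    simp only [Finset.mem_Icc] at hr
    have hk2 : 2 ≤ k := by omega
    rw [← count_lt h k hh co r hr.1 hr.2 hk2, Finset.card_filter]
    push_cast
    rfl
  have hsq : ∀ r ∈ Finset.Icc 1 (k-1),
      ((h*r/k : ℕ):ℤ)^2 = ∑ s ∈ Finset.Icc 1 (h-1), ∑ s' ∈ Finset.Icc 1 (h-1),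
        (if k*(max s s') < h*r then (1:ℤ) else 0) := by
    intro r hr
    rw [sq, hcard r hr, Finset.sum_mul_sum]
    apply Finset.sum_congr rfl
    intro s _
    apply Finset.sum_congr rfl
    intro s' _
    rcases le_total s s' with hss | hss
    · rw [max_eq_right hss]
      by_cases h2 : k*s' < h*r
      · have h1 : k*s ≤ k*s' := Nat.mul_le_mul_left _ hss
        simp [h2, lt_of_le_of_lt h1 h2]
      · simp [h2]
    · rw [max_eq_left hss]
      by_cases h2 : k*s < h*r
      · have h1 : k*s' ≤ k*s := Nat.mul_le_mul_left _ hss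
        simp [h2, lt_of_le_of_lt h1 h2]
      · simp [h2]
  have step1 : SQz h k = ∑ s ∈ Finset.Icc 1 (h-1), ∑ s' ∈ Finset.Icc 1 (h-1),
      (((k:ℤ)-1) - ((k*(max s s')/h : ℕ):ℤ)) := by
    unfold SQz
    rw [Finset.sum_congr rfl hsq]
    rw [Finset.sum_comm]
    apply Finset.sum_congr rfl
    intro s hs
    rw [Finset.sum_comm]
    apply Finset.sum_congr rfl
    intro s' hs'
    simp only [Finset.mem_Icc] at hs hs'
    exact hcount2 h k hh hk co (max s s') (le_max_of_le_left hs.1)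
      (max_le hs.2 hs'.2)
  rw [step1, sum_max_sq (h-1) (fun t => ((k:ℤ)-1) - ((k*t/h : ℕ):ℤ))]
  have expand : ∀ t ∈ Finset.Icc 1 (h-1),
      (2*(t:ℤ)-1) * (((k:ℤ)-1) - ((k*t/h : ℕ):ℤ))
        = 2*((k:ℤ)-1)*(t:ℤ) - ((k:ℤ)-1) - 2*((t:ℤ)*((k*t/h : ℕ):ℤ)) + ((k*t/h : ℕ):ℤ) := by
    intro t _
    ring
  rw [Finset.sum_congr rfl expand]
  rw [Finset.sum_add_distrib, Finset.sum_sub_distrib, Finset.sum_sub_distrib,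
    ← Finset.mul_sum, ← Finset.mul_sum, Finset.sum_const, Nat.card_Icc]
  unfold S1z Fz Cz
  have hcast : ((h - 1 + 1 - 1 : ℕ):ℤ) = (h:ℤ) - 1 := by
    have : h - 1 + 1 - 1 = h - 1 := by omega
    rw [this]
    push_cast [Nat.cast_sub hh]
    ring
  rw [nsmul_eq_mul, hcast]
  ring

end DSaux

namespace DSaux

lemma main_id (h k : ℕ) (hh : 0 < h) (hk : 0 < k) (co : Nat.Coprime h k) :
    12*((h:ℤ)^2 * Rz h k + (k:ℤ)^2 * Rz k h)
      = 3*(h:ℤ)^3*(k:ℤ)^2 + 3*(h:ℤ)^2*(k:ℤ)^3 - 9*(h:ℤ)^2*(k:ℤ)^2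
        + (h:ℤ)^3*(k:ℤ) + (h:ℤ)*(k:ℤ)^3 + (h:ℤ)*(k:ℤ) := by
  have eA := lemA h k co hk
  have eB := lemB h k hh hk co
  have eC := lemC h k hh
  have eD := lemD h k hh co
  have eg1 := g1' h hh
  have eg2 := g2' h hh
  have eg3 := g2' k hk
  linear_combination (6*(h:ℤ))*eA + (-(6:ℤ)*(h:ℤ)*(k:ℤ)^2)*eB + (12*(k:ℤ)^2)*eC
    + (-(6:ℤ)*(k:ℤ)^2)*eD + (-(3:ℤ)*(k:ℤ)^2*((k:ℤ)-1)*(2*(h:ℤ)+1))*eg1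
    + (2*(k:ℤ)^3)*eg2 + ((h:ℤ)*((h:ℤ)^2+1))*eg3

/-- dedekind sum in terms of Rz -/
lemma twelve_s_eq (h k : ℕ) (hh : 0 < h) (hk : 0 < k) (co : Nat.Coprime h k) :
    dedekindSum (h:ℤ) (k:ℤ) = (Rz h k : ℝ)/(k:ℝ)^2 - ((k:ℝ)-1)/4 := by
  have hkR : (0:ℝ) < (k:ℝ) := by exact_mod_cast hk
  unfold dedekindSum
  rw [show ((k:ℤ)).toNat = k from rfl]
  have hsplit : Finset.Icc 1 k = Finset.Icc 1 (k-1+1) := by rw [Nat.sub_add_cancel hk]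
  rw [hsplit, Finset.sum_Icc_succ_top (by omega : 1 ≤ k-1+1)]
  have hlast : saw (((k-1+1 : ℕ):ℝ) / ((k:ℤ):ℝ)) * saw (((h:ℤ):ℝ) * ((k-1+1:ℕ):ℝ) / ((k:ℤ):ℝ)) = 0 := by
    have e1 : ((k-1+1 : ℕ):ℝ) = (k:ℝ) := by
      have : k - 1 + 1 = k := by omega
      rw [this]
    rw [e1]
    have e2 : (k:ℝ) / ((k:ℤ):ℝ) = ((1:ℕ):ℝ) := by
      push_cast
      field_simp
    rw [e2, saw_nat]
    ring
  rw [hlast, add_zero]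
  have hterm : ∀ r ∈ Finset.Icc 1 (k-1),
      saw (((r:ℕ):ℝ) / ((k:ℤ):ℝ)) * saw (((h:ℤ):ℝ) * ((r:ℕ):ℝ) / ((k:ℤ):ℝ))
        = ((r:ℝ)*((h*r % k : ℕ):ℝ))/(k:ℝ)^2 - (r:ℝ)/(2*k) - ((h*r % k : ℕ):ℝ)/(2*k) + 1/4 := by
    intro r hr
    simp only [Finset.mem_Icc] at hr
    have hs1 : saw (((r:ℕ):ℝ) / ((k:ℤ):ℝ)) = (r:ℝ)/k - 1/2 := by
      rw [show (((k:ℤ)):ℝ) = ((k:ℕ):ℝ) by push_cast; ring]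
      exact saw_frac r k hr.1 (by omega)
    have hmodlt : (h*r) % k < k := Nat.mod_lt _ hk
    have hmodge : 1 ≤ (h*r) % k := by
      rcases Nat.eq_zero_or_pos ((h*r) % k) with h0 | h1
      · exfalso
        have hdvd : k ∣ h * r := Nat.dvd_of_mod_eq_zero h0
        have : k ∣ r := Nat.Coprime.dvd_of_dvd_mul_left (Nat.coprime_comm.mp co) hdvd
        have := Nat.le_of_dvd (by omega) this
        omega
      · exact h1
    have hs2 : saw (((h:ℤ):ℝ) * ((r:ℕ):ℝ) / ((k:ℤ):ℝ)) = ((h*r % k : ℕ):ℝ)/k - 1/2 := by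
      have hq : ((h:ℤ):ℝ) * ((r:ℕ):ℝ) / ((k:ℤ):ℝ)
          = ((((h*r) % k : ℕ)):ℝ)/((k:ℕ):ℝ) + (((h*r)/k : ℕ)) := by
        have e := Nat.div_add_mod (h*r) k
        have e' : ((h:ℝ))*(r:ℝ) = (k:ℝ)*(((h*r)/k : ℕ):ℝ) + (((h*r) % k : ℕ):ℝ) := by
          exact_mod_cast congrArg (Nat.cast : ℕ → ℝ) e.symm
        push_cast
        push_cast at e'
        field_simp
        try linarith [e']
      rw [hq, saw_add_nat]
      exact saw_frac _ k hmodge hmodlt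
    rw [hs1, hs2]
    field_simp
    ring
  rw [Finset.sum_congr rfl hterm]
  rw [Finset.sum_add_distrib, Finset.sum_sub_distrib, Finset.sum_sub_distrib,
    Finset.sum_const, Nat.card_Icc]
  have hRz : ∑ r ∈ Finset.Icc 1 (k-1), ((r:ℝ)*((h*r % k : ℕ):ℝ))/(k:ℝ)^2
      = (Rz h k : ℝ)/(k:ℝ)^2 := by
    rw [← Finset.sum_div]
    congr 1
    unfold Rz
    push_cast
    rfl
  have hS1 : ∑ r ∈ Finset.Icc 1 (k-1), (r:ℝ)/(2*(k:ℝ)) = (S1z k : ℝ)/(2*k) := by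
    rw [← Finset.sum_div]
    congr 1
    unfold S1z
    push_cast
    rfl
  have hSrho : ∑ r ∈ Finset.Icc 1 (k-1), ((h*r % k : ℕ):ℝ)/(2*(k:ℝ)) = (S1z k : ℝ)/(2*k) := by
    rw [← Finset.sum_div]
    congr 1
    rw [show ∑ r ∈ Finset.Icc 1 (k-1), ((h*r % k : ℕ):ℝ)
      = ((∑ r ∈ Finset.Icc 1 (k-1), ((h*r % k : ℕ):ℤ) : ℤ):ℝ) by push_cast; try rfl]
    rw [sum_rho h k co]
  rw [hRz, hS1, hSrho, nsmul_eq_mul]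
  have hg1 : 2*(S1z k : ℝ) = ((k:ℝ)-1)*k := by
    have := g1' k hk
    have : ((2*S1z k : ℤ):ℝ) = ((((k:ℤ)-1)*k : ℤ):ℝ) := by rw [this]
    push_cast at this
    linarith
  have hcard : ((k - 1 + 1 - 1:ℕ):ℝ) = (k:ℝ) - 1 := by
    have : k - 1 + 1 - 1 = k - 1 := by omega
    rw [this]
    push_cast [Nat.cast_sub hk]
    ring
  rw [hcard]
  have hk2 : (k:ℝ) ≠ 0 := ne_of_gt hkR
  have hS1v : (S1z k : ℝ) = ((k:ℝ)-1)*(k:ℝ)/2 := by linarith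
  rw [hS1v]
  field_simp
  ring

lemma reciprocity (h k : ℕ) (hh : 0 < h) (hk : 0 < k) (co : Nat.Coprime h k) :
    12*dedekindSum (h:ℤ) (k:ℤ) + 12*dedekindSum (k:ℤ) (h:ℤ)
      = -3 + (h:ℝ)/k + (k:ℝ)/h + 1/((h:ℝ)*k) := by
  have hhR : (0:ℝ) < (h:ℝ) := by exact_mod_cast hh
  have hkR : (0:ℝ) < (k:ℝ) := by exact_mod_cast hk
  rw [twelve_s_eq h k hh hk co, twelve_s_eq k h hk hh (Nat.coprime_comm.mp co)]
  have hmain := main_id h k hh hk co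
  have hmainR : 12*((h:ℝ)^2 * (Rz h k : ℝ) + (k:ℝ)^2 * (Rz k h : ℝ))
      = 3*(h:ℝ)^3*(k:ℝ)^2 + 3*(h:ℝ)^2*(k:ℝ)^3 - 9*(h:ℝ)^2*(k:ℝ)^2
        + (h:ℝ)^3*(k:ℝ) + (h:ℝ)*(k:ℝ)^3 + (h:ℝ)*(k:ℝ) := by
    exact_mod_cast congrArg (Int.cast : ℤ → ℝ) hmain
  have hh2 : (h:ℝ) ≠ 0 := ne_of_gt hhR
  have hk2 : (k:ℝ) ≠ 0 := ne_of_gt hkR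
  field_simp
  linear_combination (4:ℝ) * hmainR

end DSaux

namespace DSaux

noncomputable def Dd (c a : ℕ) : ℝ := 12 * dedekindSum (c:ℤ) (a:ℤ)
noncomputable def Ee (c a : ℕ) : ℝ := Dd c a - (c:ℝ)/(a:ℝ)

def Valid (c a : ℕ) : Prop := 1 ≤ c ∧ c ≤ a ∧ Nat.Coprime c a

lemma dedekind_period (c a m : ℕ) (ha : 0 < a) :
    dedekindSum ((m*a+c : ℕ):ℤ) (a:ℤ) = dedekindSum (c:ℤ) (a:ℤ) := by
  unfold dedekindSum
  apply Finset.sum_congr rfl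
  intro r hr
  congr 1
  have haR : ((a:ℤ):ℝ) ≠ 0 := by
    push_cast
    exact_mod_cast Nat.pos_iff_ne_zero.mp ha
  have e : (((m*a+c : ℕ):ℤ):ℝ) * (r:ℝ) / ((a:ℤ):ℝ)
      = ((c:ℤ):ℝ)*(r:ℝ)/((a:ℤ):ℝ) + ((m*r:ℕ):ℝ) := by
    push_cast
    push_cast at haR
    field_simp
    ring
  rw [e, saw_add_nat]

lemma Dn1 (n : ℕ) : dedekindSum (n:ℤ) (1:ℤ) = 0 := by
  unfold dedekindSum
  have : ((1:ℤ)).toNat = 1 := rfl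
  rw [this]
  rw [show Finset.Icc 1 1 = {1} from rfl]
  rw [Finset.sum_singleton]
  have e1 : ((1:ℕ):ℝ)/((1:ℤ):ℝ) = ((1:ℕ):ℝ) := by norm_num
  rw [e1, saw_nat]
  ring

lemma step_coprime (c a m : ℕ) (v : Valid c a) : Nat.Coprime a (m*a+c) := by
  have h := (Nat.coprime_add_mul_right_right a c m).mpr (Nat.coprime_comm.mp v.2.2)
  rwa [show c + m*a = m*a+c by ring] at h

lemma step_valid (c a m : ℕ) (v : Valid c a) (hm : 1 ≤ m) : Valid a (m*a+c) := by
  obtain ⟨h1, h2, h3⟩ := v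
  refine ⟨by omega, ?_, step_coprime c a m ⟨h1, h2, h3⟩⟩
  have : 1*a ≤ m*a := Nat.mul_le_mul_right a hm
  omega

lemma stepE (c a m : ℕ) (v : Valid c a) (hm : 1 ≤ m) :
    Ee a (m*a+c) = (m:ℝ) - 3 - Ee c a + 1/((a:ℝ)*((m*a+c:ℕ):ℝ)) := by
  have ha : 0 < a := by have := v.1; have := v.2.1; omega
  have hb : 0 < m*a+c := by have := v.1; omega
  have haR : (0:ℝ) < (a:ℝ) := by exact_mod_cast ha
  have hbR : (0:ℝ) < ((m*a+c:ℕ):ℝ) := by exact_mod_cast hb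
  have hrec := reciprocity a (m*a+c) ha hb (step_coprime c a m v)
  rw [dedekind_period c a m ha] at hrec
  unfold Ee Dd
  have e1 : ((m*a+c:ℕ):ℝ)/(a:ℝ) = (m:ℝ) + (c:ℝ)/a := by
    push_cast
    field_simp
  push_cast at hrec e1 ⊢
  linarith [hrec, e1]

lemma E1n (n : ℕ) (hn : 1 ≤ n) : Ee 1 n = (n:ℝ) - 3 + 1/n := by
  have hnR : (0:ℝ) < (n:ℝ) := by exact_mod_cast hn
  have hrec := reciprocity 1 n one_pos hn (Nat.coprime_one_left n)
  have h0 : dedekindSum (n:ℤ) (1:ℤ) = 0 := Dn1 n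
  norm_num at hrec
  rw [h0] at hrec
  simp only [inv_eq_one_div] at hrec
  unfold Ee Dd
  push_cast
  linarith [hrec]

lemma valid11 : Valid 1 1 := ⟨le_refl 1, le_refl 1, Nat.coprime_one_left 1⟩

end DSaux

namespace DSaux

lemma PJ : ∀ J : ℕ, ∀ c a : ℕ, Valid c a → ∀ ζ : ℝ, 0 ≤ ζ →
    ζ ≤ 1/((a:ℝ)*((a:ℝ)+(c:ℝ))) → ∀ σ : ℤ, (σ = 1 ∨ σ = -1) →
    ∃ C A : ℕ, Valid C A ∧ ∃ n : ℤ,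
      |Ee C A - ((n:ℝ) + (σ:ℝ)*(Ee c a - ζ))| ≤ 1/((a:ℝ) + (J:ℝ)) := by
  intro J
  induction J with
  | zero =>
    intro c a v ζ hζ0 hζm σ hσ
    have hc : 0 < c := v.1
    have ha : 0 < a := lt_of_lt_of_le hc v.2.1
    have haR : (0:ℝ) < a := by exact_mod_cast ha
    have hcR : (0:ℝ) < c := by exact_mod_cast hc
    have ha1 : (1:ℝ) ≤ a := by exact_mod_cast ha
    have hmenu : 1/((a:ℝ)*((a:ℝ)+(c:ℝ))) ≤ 1/(a:ℝ) := by
      apply one_div_le_one_div_of_le haR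
      nlinarith [ha1, hcR, haR]
    have hmpos : (0:ℝ) < 1/((a:ℝ)*((a:ℝ)+(c:ℝ))) := by positivity
    have hainv : (0:ℝ) < 1/(a:ℝ) := by positivity
    rcases hσ with rfl | rfl
    · refine ⟨c, a, v, 0, ?_⟩
      rw [abs_le]
      constructor <;> push_cast <;> simp only [add_zero] <;> linarith
    · refine ⟨a, 1*a+c, step_valid c a 1 v (le_refl 1), -2, ?_⟩
      have hδ := stepE c a 1 v (le_refl 1)
      push_cast at hδ
      rw [show (1:ℝ)*(a:ℝ)+(c:ℝ) = (a:ℝ)+(c:ℝ) by ring] at hδ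
      rw [abs_le]
      constructor <;> push_cast <;> simp only [add_zero] <;> linarith [hδ]
  | succ J ih =>
    intro c a v ζ hζ0 hζm σ hσ
    classical
    have hc : 0 < c := v.1
    have ha : 0 < a := lt_of_lt_of_le hc v.2.1
    have haR : (0:ℝ) < a := by exact_mod_cast ha
    have hcR : (0:ℝ) < c := by exact_mod_cast hc
    have hJpos : (0:ℝ) < (a:ℝ) + ((J:ℝ)+1) := by positivity
    rcases eq_or_lt_of_le hζ0 with hz | hζpos
    · -- ζ = 0
      have hJinv : (0:ℝ) < 1/((a:ℝ)+((J:ℝ)+1)) := by positivity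
      rcases hσ with rfl | rfl
      · refine ⟨c, a, v, 0, ?_⟩
        rw [abs_le]
        constructor <;> push_cast <;> linarith [hJinv]
      · set m : ℕ := a + J + 1 with hm
        refine ⟨a, m*a+c, step_valid c a m v (by omega), (m:ℤ) - 3, ?_⟩
        have hδ := stepE c a m v (by omega : 1 ≤ m)
        have hdpos : (0:ℝ) < (a:ℝ)*((m*a+c:ℕ):ℝ) := by
          have : (0:ℝ) < ((m*a+c:ℕ):ℝ) := by exact_mod_cast (by omega : 0 < m*a+c)
          positivity
        have hbound : 1/((a:ℝ)*((m*a+c:ℕ):ℝ)) ≤ 1/((a:ℝ) + ((J:ℝ)+1)) := by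
          apply one_div_le_one_div_of_le hJpos
          have h1 : (m:ℕ) ≤ a*(m*a+c) := by
            calc m ≤ m*a := Nat.le_mul_of_pos_right m ha
            _ ≤ m*a + c := Nat.le_add_right _ _
            _ ≤ a*(m*a+c) := Nat.le_mul_of_pos_left _ ha
          have h2 : ((m:ℕ):ℝ) ≤ (a:ℝ)*((m*a+c:ℕ):ℝ) := by exact_mod_cast h1
          have h3 : ((m:ℕ):ℝ) = (a:ℝ) + (J:ℝ) + 1 := by rw [hm]; push_cast; ring
          linarith
        have hbpos : (0:ℝ) < 1/((a:ℝ)*((m*a+c:ℕ):ℝ)) := by positivity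
        rw [abs_le]
        constructor <;> push_cast <;> push_cast at hδ hbound hbpos <;> linarith [hδ]
    · -- ζ > 0
      set P : ℕ → Prop := fun m => ζ ≤ 1/((a:ℝ)*((m*a+c:ℕ):ℝ)) with hP
      have hinvζ : (0:ℝ) < 1/ζ := by positivity
      set B : ℕ := ⌈1/ζ⌉₊ with hB
      have hB1 : 1 ≤ B := by
        rw [hB]
        exact Nat.one_le_iff_ne_zero.mpr (Nat.pos_iff_ne_zero.mp (Nat.ceil_pos.mpr hinvζ))
      have hP1 : P 1 := by
        show ζ ≤ 1/((a:ℝ)*((1*a+c:ℕ):ℝ))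
        have hcast : ((1*a+c:ℕ):ℝ) = (a:ℝ)+(c:ℝ) := by push_cast; ring
        rw [hcast]
        exact hζm
      have hden : ∀ m : ℕ, (m:ℝ) ≤ (a:ℝ)*((m*a+c:ℕ):ℝ) := by
        intro m
        have h1 : m ≤ a*(m*a+c) := by
          calc m ≤ m*a := Nat.le_mul_of_pos_right m ha
          _ ≤ m*a + c := Nat.le_add_right _ _
          _ ≤ a*(m*a+c) := Nat.le_mul_of_pos_left _ ha
        exact_mod_cast h1
      have hBub : ∀ m : ℕ, B < m → ¬ P m := by
        intro m hBm hPm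
        have hPmm : ζ ≤ 1/((a:ℝ)*((m*a+c:ℕ):ℝ)) := hPm
        have h1 : 1/ζ < (m:ℝ) := by
          have := Nat.le_ceil (1/ζ)
          have h2 : ((B:ℕ):ℝ) < (m:ℝ) := by exact_mod_cast hBm
          linarith
        have h2 : 1/ζ < (a:ℝ)*((m*a+c:ℕ):ℝ) := lt_of_lt_of_le h1 (hden m)
        have h3 := one_div_lt_one_div_of_lt hinvζ h2
        rw [one_div_one_div] at h3
        linarith
      set m₁ : ℕ := Nat.findGreatest P B with hm₁
      have hm1ge : 1 ≤ m₁ := Nat.le_findGreatest hB1 hP1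
      have hPm1 : ζ ≤ 1/((a:ℝ)*((m₁*a+c:ℕ):ℝ)) := Nat.findGreatest_spec hB1 hP1
      have hnot : ¬ P (m₁ + 1) := by
        by_cases hle : m₁ + 1 ≤ B
        · exact Nat.findGreatest_is_greatest (by omega) hle
        · exact hBub (m₁+1) (by omega)
      have hnot' : 1/((a:ℝ)*(((m₁+1)*a+c:ℕ):ℝ)) < ζ := by
        have h4 : ¬ (ζ ≤ 1/((a:ℝ)*(((m₁+1)*a+c:ℕ):ℝ))) := hnot
        push_neg at h4
        exact h4
      set b : ℕ := m₁*a + c with hb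
      have hbpos : 0 < b := by rw [hb]; omega
      have hbR : (0:ℝ) < (b:ℝ) := by exact_mod_cast hbpos
      have hvab : Valid a b := step_valid c a m₁ v hm1ge
      set ζ' : ℝ := 1/((a:ℝ)*(b:ℝ)) - ζ with hζ'
      have hδcast : ((m₁*a+c:ℕ):ℝ) = (b:ℝ) := by rw [hb]
      have hζ'0 : 0 ≤ ζ' := by
        rw [hζ']
        rw [hδcast] at hPm1
        linarith
      have hζ'le : ζ' ≤ 1/((b:ℝ)*((b:ℝ)+(a:ℝ))) := by
        have hcast2 : (((m₁+1)*a+c:ℕ):ℝ) = (b:ℝ) + (a:ℝ) := by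
          rw [hb]; push_cast; ring
        rw [hcast2] at hnot'
        have hgap : 1/((a:ℝ)*(b:ℝ)) - 1/((a:ℝ)*((b:ℝ)+(a:ℝ))) = 1/((b:ℝ)*((b:ℝ)+(a:ℝ))) := by
          field_simp
          ring
        rw [hζ']
        linarith
      obtain ⟨C, A, vCA, n', hbnd⟩ := ih a b hvab ζ' hζ'0 hζ'le (-σ)
        (by rcases hσ with rfl | rfl
            · exact Or.inr rfl
            · exact Or.inl (by norm_num))
      refine ⟨C, A, vCA, n' - σ*((m₁:ℤ)-3), ?_⟩
      have hstep := stepE c a m₁ v hm1ge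
      rw [hδcast] at hstep
      have heq : (((n' - σ*((m₁:ℤ)-3)) : ℤ):ℝ) + (σ:ℝ)*(Ee c a - ζ)
          = ((n':ℤ):ℝ) + (((-σ : ℤ)):ℝ)*(Ee a b - ζ') := by
        rw [hζ', hstep]
        push_cast
        ring
      rw [← heq] at hbnd
      apply le_trans hbnd
      push_cast
      apply one_div_le_one_div_of_le hJpos
      have hba : a + 1 ≤ b := by
        rw [hb]
        have : 1*a ≤ m₁*a := Nat.mul_le_mul_right a hm1ge
        omega
      have : ((a:ℝ)) + 1 ≤ (b:ℝ) := by exact_mod_cast hba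
      linarith

end DSaux

namespace DSaux

lemma boost (c a : ℕ) (v : Valid c a) (Δ : ℕ) (η : ℝ) (hη : 0 < η) :
    ∃ C A : ℕ, Valid C A ∧ |Ee C A - (Ee c a + (Δ:ℝ))| ≤ η := by
  have hc : 0 < c := v.1
  have ha : 0 < a := lt_of_lt_of_le hc v.2.1
  set m₁ : ℕ := ⌈2/η⌉₊ + 1 with hm₁
  have hm1pos : 1 ≤ m₁ := by omega
  set b : ℕ := m₁*a + c with hb
  have hbpos : 0 < b := by rw [hb]; omega
  have hvab : Valid a b := step_valid c a m₁ v hm1pos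
  set m₂ : ℕ := m₁ + Δ with hm₂
  have hm2pos : 1 ≤ m₂ := by omega
  refine ⟨b, m₂*b + a, step_valid a b m₂ hvab hm2pos, ?_⟩
  have h1 := stepE c a m₁ v hm1pos
  have h2 := stepE a b m₂ hvab hm2pos
  have hm1R : 2/η < ((m₁:ℕ):ℝ) := by
    have := Nat.le_ceil (2/η)
    have h3 : ((⌈2/η⌉₊:ℕ):ℝ) < ((m₁:ℕ):ℝ) := by exact_mod_cast (by omega : ⌈2/η⌉₊ < m₁)
    linarith
  have hm1Rpos : (0:ℝ) < ((m₁:ℕ):ℝ) := by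
    have : (0:ℝ) ≤ 2/η := by positivity
    linarith
  have hinvm1 : 1/((m₁:ℕ):ℝ) ≤ η/2 := by
    rw [div_le_div_iff₀ hm1Rpos (by norm_num)]
    have := (div_lt_iff₀ hη).mp hm1R
    linarith
  -- δ1 bound
  have hd1 : (0:ℝ) < (a:ℝ)*((m₁*a+c:ℕ):ℝ) := by
    have : (0:ℝ) < ((m₁*a+c:ℕ):ℝ) := by exact_mod_cast (by omega : 0 < m₁*a+c)
    have haR : (0:ℝ) < (a:ℝ) := by exact_mod_cast ha
    positivity
  have hδ1 : 1/((a:ℝ)*((m₁*a+c:ℕ):ℝ)) ≤ η/2 := by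
    have h4 : (m₁:ℕ) ≤ a*(m₁*a+c) := by
      calc m₁ ≤ m₁*a := Nat.le_mul_of_pos_right m₁ ha
      _ ≤ m₁*a + c := Nat.le_add_right _ _
      _ ≤ a*(m₁*a+c) := Nat.le_mul_of_pos_left _ ha
    have h5 : ((m₁:ℕ):ℝ) ≤ (a:ℝ)*((m₁*a+c:ℕ):ℝ) := by exact_mod_cast h4
    have := one_div_le_one_div_of_le hm1Rpos h5
    linarith
  have hd2 : (0:ℝ) < (b:ℝ)*((m₂*b+a:ℕ):ℝ) := by
    have : (0:ℝ) < ((m₂*b+a:ℕ):ℝ) := by exact_mod_cast (by omega : 0 < m₂*b+a)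
    have hbR : (0:ℝ) < (b:ℝ) := by exact_mod_cast hbpos
    positivity
  have hδ2 : 1/((b:ℝ)*((m₂*b+a:ℕ):ℝ)) ≤ η/2 := by
    have h4 : (m₁:ℕ) ≤ b*(m₂*b+a) := by
      have hb1 : m₁ ≤ b := by rw [hb]; nlinarith [Nat.le_mul_of_pos_right m₁ ha]
      calc m₁ ≤ b := hb1
      _ ≤ b*(m₂*b+a) := Nat.le_mul_of_pos_right b (by omega)
    have h5 : ((m₁:ℕ):ℝ) ≤ (b:ℝ)*((m₂*b+a:ℕ):ℝ) := by exact_mod_cast h4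
    have := one_div_le_one_div_of_le hm1Rpos h5
    linarith
  have hpos1 : (0:ℝ) < 1/((a:ℝ)*((m₁*a+c:ℕ):ℝ)) := by positivity
  have hpos2 : (0:ℝ) < 1/((b:ℝ)*((m₂*b+a:ℕ):ℝ)) := by positivity
  have hmcast : ((m₂:ℕ):ℝ) = ((m₁:ℕ):ℝ) + (Δ:ℝ) := by rw [hm₂]; push_cast; ring
  have hbcast : ((m₁*a+c:ℕ):ℝ) = (b:ℝ) := by rw [hb]
  rw [hbcast] at h1 hδ1 hpos1
  rw [abs_le]
  constructor <;> linarith [h1, h2, hδ1, hδ2, hpos1, hpos2, hmcast]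

end DSaux

set_option maxHeartbeats 1000000 in
open DSaux in
theorem rat_ge_neg_three_approx (x : ℚ) (hx : -3 ≤ x) (ε : ℝ) (hε : 0 < ε) :
    ∃ (a b : ℤ), 0 < b ∧ Int.gcd a b = 1 ∧ |(x : ℝ) - 12 * dedekindSum a b| < ε := by
  classical
  set X : ℝ := (x:ℝ) with hX
  set y : ℝ := 1 - Int.fract X with hy
  have hfr0 : 0 ≤ Int.fract X := Int.fract_nonneg X
  have hfr1 : Int.fract X < 1 := Int.fract_lt_one X
  have hy0 : 0 < y := by rw [hy]; linarith
  have hy1 : y ≤ 1 := by rw [hy]; linarith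
  set n : ℕ := ⌊1/y⌋₊ with hn
  have h1y : 1 ≤ 1/y := by
    rw [le_div_iff₀ hy0]
    linarith
  have hn1 : 1 ≤ n := by
    rw [hn]
    exact Nat.le_floor (by exact_mod_cast h1y)
  have hnR : (0:ℝ) < (n:ℝ) := by exact_mod_cast hn1
  have hfle : ((n:ℕ):ℝ) ≤ 1/y := by rw [hn]; exact Nat.floor_le (by positivity)
  have hflt : 1/y < ((n:ℕ):ℝ) + 1 := by rw [hn]; exact Nat.lt_floor_add_one _
  set ζ₀ : ℝ := 1/(n:ℝ) - y with hζ₀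
  have hyn : y ≤ 1/(n:ℝ) := by
    have h2 := one_div_le_one_div_of_le hnR hfle
    rwa [one_div_one_div] at h2
  have hζ₀0 : 0 ≤ ζ₀ := by rw [hζ₀]; linarith
  have hygt : 1/((n:ℝ)+1) < y := by
    have h2 := one_div_lt_one_div_of_lt (by positivity : (0:ℝ) < 1/y) hflt
    rwa [one_div_one_div] at h2
  have hζ₀m : ζ₀ ≤ 1/((n:ℝ)*((n:ℝ)+1)) := by
    have hgap : 1/(n:ℝ) - 1/((n:ℝ)+1) = 1/((n:ℝ)*((n:ℝ)+1)) := by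
      field_simp
      ring
    rw [hζ₀]
    linarith
  have v1n : Valid 1 n := ⟨le_refl 1, hn1, Nat.coprime_one_left n⟩
  set J : ℕ := ⌈8/ε⌉₊ with hJdef
  have hJ8 : 8/ε ≤ ((J:ℕ):ℝ) := by rw [hJdef]; exact Nat.le_ceil _
  have hJpos : (0:ℝ) < ((J:ℕ):ℝ) := lt_of_lt_of_le (by positivity) hJ8
  have hJ : 1/((n:ℝ)+(J:ℝ)) ≤ ε/8 := by
    have h1 : 1/((n:ℝ)+(J:ℝ)) ≤ 1/(J:ℝ) :=
      one_div_le_one_div_of_le hJpos (by linarith)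
    have h2 : 1/(J:ℝ) ≤ ε/8 := by
      rw [div_le_div_iff₀ hJpos (by norm_num)]
      have := (div_le_iff₀ hε).mp hJ8
      linarith
    linarith
  obtain ⟨c₁, a₁, v₁, n', h₁⟩ := PJ J 1 n v1n ζ₀ hζ₀0
    (by push_cast; exact hζ₀m) 1 (Or.inl rfl)
  have hE1n : Ee 1 n = (n:ℝ) - 3 + 1/n := E1n n hn1
  -- choose Δ
  set T : ℤ := ⌈(8:ℝ)/ε⌉ + ⌈|X|⌉ + 10 with hT
  set K0 : ℤ := n' + (n:ℤ) - 3 with hK0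
  set Δ : ℕ := (T - K0).toNat + 1 with hΔ
  have hKT : T < K0 + (Δ:ℤ) := by
    rw [hΔ]
    push_cast
    rcases le_or_gt K0 T with hle | hlt
    · rw [Int.toNat_of_nonneg (by omega)]
      omega
    · have : (T - K0).toNat = 0 := by omega
      rw [this]
      omega
  obtain ⟨C, A, vCA, h₂⟩ := boost c₁ a₁ v₁ Δ (ε/8) (by positivity)
  -- combined bound
  have hcomb : |Ee C A - (((K0 + (Δ:ℤ)):ℤ):ℝ) - y| ≤ ε/4 := by
    rw [abs_le] at h₁ h₂ ⊢
    obtain ⟨h₁a, h₁b⟩ := h₁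
    obtain ⟨h₂a, h₂b⟩ := h₂
    have hK0R : ((K0:ℤ):ℝ) = (n':ℝ) + (n:ℝ) - 3 := by rw [hK0]; push_cast; ring
    push_cast at h₁a h₁b h₂a h₂b ⊢
    constructor <;> linarith [hE1n, hJ, hζ₀, hK0R]
  -- final step
  set M : ℤ := K0 + (Δ:ℤ) + ⌊X⌋ + 4 with hM
  have hfloorceil : -⌈|X|⌉ ≤ ⌊X⌋ := by
    have h3 : -X ≤ |X| := neg_le_abs X
    have h4 : ⌈-X⌉ ≤ ⌈|X|⌉ := Int.ceil_le_ceil h3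
    rw [Int.ceil_neg] at h4
    omega
  have hM8 : 8/ε + 1 ≤ (M:ℝ) := by
    have h5 : ⌈(8:ℝ)/ε⌉ + 15 ≤ M := by
      rw [hM, hT] at *
      omega
    have h6 : 8/ε ≤ (⌈(8:ℝ)/ε⌉ : ℝ) := Int.le_ceil _
    have h7 : ((⌈(8:ℝ)/ε⌉ + 15 : ℤ):ℝ) ≤ (M:ℝ) := by exact_mod_cast h5
    push_cast at h7
    linarith
  have hMpos : 0 < M := by
    have : (0:ℝ) < (M:ℝ) := by
      have : (0:ℝ) < 8/ε := by positivity
      linarith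
    exact_mod_cast this
  set Mn : ℕ := M.toNat with hMn
  have hMnM : ((Mn:ℕ):ℤ) = M := Int.toNat_of_nonneg (le_of_lt hMpos)
  have hMn1 : 1 ≤ Mn := by omega
  set B : ℕ := Mn * A + C with hB
  have vAB : Valid A B := step_valid C A Mn vCA hMn1
  have hApos : 0 < A := lt_of_lt_of_le vCA.1 vCA.2.1
  have hCpos : 0 < C := vCA.1
  have hBpos : 0 < B := by rw [hB]; omega
  have hAR : (0:ℝ) < (A:ℝ) := by exact_mod_cast hApos
  have hBR : (0:ℝ) < (B:ℝ) := by exact_mod_cast hBpos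
  have hMnR : (0:ℝ) < (Mn:ℝ) := by exact_mod_cast hMn1
  have hstep := stepE C A Mn vCA hMn1
  rw [show ((Mn*A+C:ℕ):ℝ) = (B:ℝ) by rw [hB]] at hstep
  -- Ee A B = Mn - 3 - Ee C A + 1/(A*B), where the Nat arg is B
  have hEeAB : Ee A (Mn*A+C) = Ee A B := by rw [hB]
  rw [hEeAB] at hstep
  -- bounds on A/B and 1/(A*B)
  have hABle : (A:ℝ)/(B:ℝ) ≤ 1/(Mn:ℝ) := by
    rw [div_le_div_iff₀ hBR hMnR]
    have h8 : A * Mn ≤ B := by rw [hB]; nlinarith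
    have : ((A*Mn:ℕ):ℝ) ≤ (B:ℝ) := by exact_mod_cast h8
    push_cast at this
    linarith
  have hiABle : 1/((A:ℝ)*(B:ℝ)) ≤ 1/(Mn:ℝ) := by
    apply one_div_le_one_div_of_le hMnR
    have h8 : Mn ≤ A * B := by
      calc Mn ≤ Mn * A := Nat.le_mul_of_pos_right Mn hApos
      _ ≤ B := by rw [hB]; omega
      _ ≤ A * B := Nat.le_mul_of_pos_left B hApos
    exact_mod_cast h8
  have hMnε : 1/(Mn:ℝ) ≤ ε/8 := by
    have h9 : ((Mn:ℕ):ℝ) = (M:ℝ) := by exact_mod_cast hMnM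
    rw [div_le_div_iff₀ hMnR (by norm_num)]
    have h10 := (div_le_iff₀ hε).mp (le_trans (by linarith : 8/ε ≤ (M:ℝ)) (le_of_eq h9.symm))
    linarith
  have hABpos : (0:ℝ) < (A:ℝ)/(B:ℝ) := by positivity
  have hiABpos : (0:ℝ) < 1/((A:ℝ)*(B:ℝ)) := by positivity
  -- the 12*dedekindSum value
  have hDd : 12 * dedekindSum (A:ℤ) (B:ℤ) = Ee A B + (A:ℝ)/(B:ℝ) := by
    unfold Ee Dd
    ring
  refine ⟨(A:ℤ), (B:ℤ), by exact_mod_cast hBpos, ?_, ?_⟩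
  · rw [Int.gcd_natCast_natCast]
    exact vAB.2.2
  · rw [hDd]
    -- X + 3 + (K0+Δ) + y - M = 0
    have hfract : Int.fract X = X - ((⌊X⌋:ℤ):ℝ) := (Int.self_sub_floor X).symm
    have hzero : X + 3 + (((K0 + (Δ:ℤ)):ℤ):ℝ) + y - (M:ℝ) = 0 := by
      rw [hy, hfract, hM]
      push_cast
      ring
    have hMnMR : ((Mn:ℕ):ℝ) = (M:ℝ) := by exact_mod_cast hMnM
    clear_value X y n ζ₀ J T K0 Δ M Mn B
    rw [abs_le] at hcomb
    obtain ⟨hca, hcb⟩ := hcomb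
    rw [hstep, abs_lt]
    push_cast at hzero hca hcb ⊢
    constructor <;> linarith [hMnε, hABle, hiABle, hABpos, hiABpos, hMnMR, hε, hzero, hca, hcb]
end

section
/- With m = 25, n = 6886, t = 25090: 12·s(627251, 172769740) = -3 + 2/172769740 + 25090/6886, and in particular |12·s(627251, 172769740) - 7/11| < 1/100. -/
open Finset

lemma saw_intCast_add (n : ℤ) (x : ℝ) : saw ((n:ℝ) + x) = saw x := by
  unfold saw; rw [Int.fract_intCast_add]

lemma saw_one : saw 1 = 0 := by
  unfold saw; norm_num

-- bijection i ↦ h*i % k on Icc 1 (k-1)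
lemma sum_mod_perm {h k : ℕ} (cop : Nat.Coprime h k) (f : ℕ → ℤ) :
    ∑ i ∈ Icc 1 (k-1), f (h * i % k) = ∑ i ∈ Icc 1 (k-1), f i := by
  rcases Nat.lt_or_ge k 2 with hk | hk
  · interval_cases k <;> simp
  obtain ⟨h', -, hh'⟩ := Nat.exists_mul_mod_eq_one_of_coprime cop hk
  have key : ∀ u v : ℕ, u * v % k = 1 → ∀ a, a < k → v * (u * a % k) % k = a := by
    intro u v huv a ha
    have h1 : v * (u * a % k) % k = v * (u * a) % k :=
      Nat.ModEq.mul_left v (Nat.mod_modEq _ _)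
    have h2 : v * (u * a) = (u * v) * a := by ring
    have h3 : (u * v) * a % k = (u * v % k) * a % k :=
      (Nat.ModEq.mul_right a (Nat.mod_modEq _ _)).symm
    rw [h1, h2, h3, huv, one_mul, Nat.mod_eq_of_lt ha]
  refine Finset.sum_nbij' (fun i => h * i % k) (fun a => h' * a % k) ?_ ?_ ?_ ?_ ?_
  · intro a ha
    simp only [mem_Icc] at ha ⊢
    have hlt : h * a % k < k := Nat.mod_lt _ (by omega)
    have hne : h * a % k ≠ 0 := by
      intro h0
      have := key h h' hh' a (by omega)
      rw [h0] at this
      simp at this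
      omega
    omega
  · intro a ha
    simp only [mem_Icc] at ha ⊢
    have hlt : h' * a % k < k := Nat.mod_lt _ (by omega)
    have hne : h' * a % k ≠ 0 := by
      intro h0
      have := key h' h (by rwa [Nat.mul_comm] at hh') a (by omega)
      rw [h0] at this
      simp at this
      omega
    omega
  · intro a ha
    simp only [mem_Icc] at ha
    exact key h h' hh' a (by omega)
  · intro a ha
    simp only [mem_Icc] at ha
    exact key h' h (by rwa [Nat.mul_comm] at hh') a (by omega)
  · intro a _; rfl

lemma gauss1 (n : ℕ) : 2 * ∑ i ∈ Icc 1 n, (i:ℤ) = n * (n+1) := by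
  induction n with
  | zero => simp
  | succ m ih =>
    rw [Finset.sum_Icc_succ_top (by omega)]
    push_cast
    push_cast at ih
    ring_nf
    ring_nf at ih
    linarith

lemma gauss2 (n : ℕ) : 6 * ∑ i ∈ Icc 1 n, (i:ℤ)^2 = n * (n+1) * (2*n+1) := by
  induction n with
  | zero => simp
  | succ m ih =>
    rw [Finset.sum_Icc_succ_top (by omega)]
    push_cast
    push_cast at ih
    ring_nf
    ring_nf at ih
    linarith


lemma no_eq {h k : ℕ} (cop : Nat.Coprime h k) {i : ℕ} (hi1 : 1 ≤ i) (hi2 : i ≤ k-1) :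
    ∀ j : ℕ, k * j ≠ h * i := by
  intro j heq
  have hdvd : k ∣ h * i := ⟨j, heq.symm⟩
  have : k ∣ i := (Nat.Coprime.dvd_of_dvd_mul_left cop.symm) hdvd
  have := Nat.le_of_dvd (by omega) this
  omega

lemma div_eq_card {h k : ℕ} (cop : Nat.Coprime h k) (hh : 0 < h) (hk : 0 < k)
    {i : ℕ} (hi1 : 1 ≤ i) (hi2 : i ≤ k-1) :
    (((Icc 1 (h-1)).filter (fun j => k*j < h*i)).card) = h*i/k := by
  have hub : h*i/k ≤ h - 1 := by
    have h1 : h*i/k < h := by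
      rw [Nat.div_lt_iff_lt_mul hk]
      exact (mul_lt_mul_iff_right₀ hh).mpr (by omega)
    exact Nat.le_sub_one_of_lt h1
  have hfe : (Icc 1 (h-1)).filter (fun j => k*j < h*i) = Icc 1 (h*i/k) := by
    ext j
    simp only [mem_filter, mem_Icc]
    constructor
    · rintro ⟨⟨hj1, _⟩, hlt⟩
      refine ⟨hj1, ?_⟩
      rw [Nat.le_div_iff_mul_le hk, Nat.mul_comm]
      exact hlt.le
    · rintro ⟨hj1, hj2⟩
      have hjk : j * k ≤ h * i := (Nat.le_div_iff_mul_le hk).mp hj2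
      rw [Nat.mul_comm] at hjk
      exact ⟨⟨hj1, le_trans hj2 hub⟩, lt_of_le_of_ne hjk (no_eq cop hi1 hi2 j)⟩
  rw [hfe, Nat.card_Icc, Nat.add_sub_cancel]

lemma count_upper {h k : ℕ} (cop : Nat.Coprime h k) (hh : 0 < h) (hk : 0 < k)
    {M : ℕ} (hM1 : 1 ≤ M) (hM2 : M ≤ h-1) :
    (((Icc 1 (k-1)).filter (fun i => k*M < h*i)).card) = (k-1) - k*M/h := by
  have hfe : (Icc 1 (k-1)).filter (fun i => k*M < h*i) = Icc (k*M/h + 1) (k-1) := by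
    ext i
    simp only [mem_filter, mem_Icc]
    constructor
    · rintro ⟨⟨hi1, hi2⟩, hlt⟩
      refine ⟨?_, hi2⟩
      by_contra hcon
      have h1 : i ≤ k*M/h := Nat.lt_succ_iff.mp (Nat.not_le.mp hcon)
      have h2 := (Nat.le_div_iff_mul_le hh).mp h1
      rw [Nat.mul_comm] at h2
      omega
    · rintro ⟨hi1, hi2⟩
      have hi0 : 1 ≤ i := le_trans (Nat.succ_le_succ (Nat.zero_le _)) hi1
      refine ⟨⟨hi0, hi2⟩, ?_⟩
      have hni : ¬ (i ≤ k*M/h) := Nat.not_le.mpr (Nat.lt_of_succ_le hi1)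
      rw [Nat.le_div_iff_mul_le hh] at hni
      have := Nat.not_le.mp hni
      rw [Nat.mul_comm i h] at this
      exact this
  rw [hfe, Nat.card_Icc, Nat.succ_sub_succ]


def Tz (h k : ℕ) : ℤ := ∑ i ∈ Icc 1 (k-1), (i:ℤ) * ((h*i/k : ℕ) : ℤ)
def Sz (k : ℕ) : ℤ := ∑ i ∈ Icc 1 (k-1), (i:ℤ)^2
def Pz (h k : ℕ) : ℤ := ∑ i ∈ Icc 1 (k-1), (i:ℤ) * ((h*i % k : ℕ) : ℤ)
def Vz (h k : ℕ) : ℤ := ∑ i ∈ Icc 1 (k-1), ((h*i/k : ℕ) : ℤ)^2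

lemma modcast (h k i : ℕ) : ((h*i % k : ℕ) : ℤ) = (h:ℤ)*i - k * ((h*i/k : ℕ) : ℤ) := by
  have := Nat.mod_add_div (h*i) k
  have h2 : ((h*i % k : ℕ):ℤ) + (k:ℤ) * ((h*i/k : ℕ):ℤ) = (h:ℤ)*(i:ℤ) := by exact_mod_cast this
  linarith

lemma Pz_eq (h k : ℕ) : Pz h k = h * Sz k - k * Tz h k := by
  unfold Pz Sz Tz
  rw [Finset.mul_sum, Finset.mul_sum, ← Finset.sum_sub_distrib]
  refine Finset.sum_congr rfl fun i _ => ?_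
  rw [modcast h k i]
  ring

lemma L8 {h k : ℕ} (cop : Nat.Coprime h k) :
    (h:ℤ)^2 * Sz k - 2*h*k* Tz h k + k^2 * Vz h k = Sz k := by
  have base := sum_mod_perm cop (fun a => (a:ℤ)^2)
  have lhs : ∑ i ∈ Icc 1 (k-1), ((h*i % k : ℕ) : ℤ)^2
      = ∑ i ∈ Icc 1 (k-1), ((h:ℤ)^2*(i:ℤ)^2 - 2*h*k*((i:ℤ)*((h*i/k : ℕ):ℤ)) + k^2*(((h*i/k : ℕ):ℤ))^2) := by
    refine Finset.sum_congr rfl fun i _ => ?_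
    rw [modcast h k i]
    ring
  have split : ∑ i ∈ Icc 1 (k-1), ((h:ℤ)^2*(i:ℤ)^2 - 2*h*k*((i:ℤ)*((h*i/k : ℕ):ℤ)) + k^2*(((h*i/k : ℕ):ℤ))^2)
      = (h:ℤ)^2 * Sz k - 2*h*k* Tz h k + k^2 * Vz h k := by
    unfold Sz Tz Vz
    rw [Finset.sum_add_distrib, Finset.sum_sub_distrib, ← Finset.mul_sum, ← Finset.mul_sum, ← Finset.mul_sum]
  rw [lhs, split] at base
  have : ∑ i ∈ Icc 1 (k-1), (i:ℤ)^2 = Sz k := rfl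
  rw [this] at base
  exact base

lemma sum_max (g : ℕ → ℤ) (N : ℕ) :
    ∑ j ∈ Icc 1 N, ∑ j' ∈ Icc 1 N, g (max j j') = ∑ M ∈ Icc 1 N, (2*(M:ℤ) - 1) * g M := by
  induction N with
  | zero => simp
  | succ n ih =>
    rw [Finset.sum_Icc_succ_top (by omega)]
    rw [Finset.sum_Icc_succ_top (by omega) (fun M => (2*(M:ℤ)-1) * g M)]
    have e1 : ∀ j ∈ Icc 1 n, (∑ j' ∈ Icc 1 (n+1), g (max j j'))
        = (∑ j' ∈ Icc 1 n, g (max j j')) + g (n+1) := by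
      intro j hj
      simp only [mem_Icc] at hj
      rw [Finset.sum_Icc_succ_top (by omega)]
      congr 1
      rw [Nat.max_eq_right (by omega)]
    rw [Finset.sum_congr rfl e1, Finset.sum_add_distrib, ih]
    have e2 : ∀ j' ∈ Icc 1 (n+1), g (max (n+1) j') = g (n+1) := by
      intro j' hj'
      simp only [mem_Icc] at hj'
      rw [Nat.max_eq_left (by omega)]
    rw [Finset.sum_congr rfl e2]
    rw [Finset.sum_const, Finset.sum_const, Nat.card_Icc, Nat.card_Icc]
    simp only [Nat.add_sub_cancel, smul_eq_mul]
    push_cast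
    ring

lemma Vz_eq {h k : ℕ} (cop : Nat.Coprime h k) (hh : 0 < h) (hk : 0 < k) :
    Vz h k = ∑ M ∈ Icc 1 (h-1), (2*(M:ℤ)-1) * ((k:ℤ) - 1 - ((k*M/h : ℕ):ℤ)) := by
  unfold Vz
  have step1 : ∀ i ∈ Icc 1 (k-1), ((h*i/k : ℕ):ℤ)^2
      = ∑ j ∈ Icc 1 (h-1), ∑ j' ∈ Icc 1 (h-1), (if k * max j j' < h*i then (1:ℤ) else 0) := by
    intro i hi
    simp only [mem_Icc] at hi
    rw [← div_eq_card cop hh hk hi.1 hi.2, Finset.card_filter]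
    push_cast
    rw [sq, Finset.sum_mul_sum]
    refine Finset.sum_congr rfl fun j hj => Finset.sum_congr rfl fun j' hj' => ?_
    have hmax : k * max j j' < h*i ↔ (k*j < h*i ∧ k*j' < h*i) := by
      rcases Nat.le_total j j' with hjj | hjj
      · rw [Nat.max_eq_right hjj]
        have := Nat.mul_le_mul_left k hjj
        constructor
        · intro hx; exact ⟨by omega, hx⟩
        · exact fun hx => hx.2
      · rw [Nat.max_eq_left hjj]
        have := Nat.mul_le_mul_left k hjj
        constructor
        · intro hx; exact ⟨hx, by omega⟩
        · exact fun hx => hx.1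
    rw [eq_comm]
    split_ifs with h1 h2 h3 <;> simp_all <;> omega
  have step2 : ∀ M, 1 ≤ M → M ≤ h - 1 →
      (∑ i ∈ Icc 1 (k-1), if k * M < h*i then (1:ℤ) else 0)
        = (k:ℤ) - 1 - ((k*M/h : ℕ):ℤ) := by
    intro M hM1 hM2
    have hcard : (∑ i ∈ Icc 1 (k-1), if k * M < h*i then (1:ℤ) else 0)
        = ((((Icc 1 (k-1)).filter (fun i => k*M < h*i)).card : ℕ) : ℤ) := by
      rw [Finset.card_filter]
      push_cast
      rfl
    have hMh : M < h := by omega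
    have hle : k*M/h ≤ k - 1 := by
      have h1 : k*M/h < k := by
        rw [Nat.div_lt_iff_lt_mul hh]
        exact (mul_lt_mul_iff_right₀ hk).mpr hMh
      exact Nat.le_sub_one_of_lt h1
    rw [hcard, count_upper cop hh hk hM1 hM2, Nat.cast_sub hle, Nat.cast_pred hk]
  rw [Finset.sum_congr rfl step1]
  calc ∑ i ∈ Icc 1 (k-1), ∑ j ∈ Icc 1 (h-1), ∑ j' ∈ Icc 1 (h-1), (if k * max j j' < h*i then (1:ℤ) else 0)
      = ∑ j ∈ Icc 1 (h-1), ∑ i ∈ Icc 1 (k-1), ∑ j' ∈ Icc 1 (h-1), (if k * max j j' < h*i then (1:ℤ) else 0) := Finset.sum_comm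
    _ = ∑ j ∈ Icc 1 (h-1), ∑ j' ∈ Icc 1 (h-1), ∑ i ∈ Icc 1 (k-1), (if k * max j j' < h*i then (1:ℤ) else 0) :=
        Finset.sum_congr rfl fun j _ => Finset.sum_comm
    _ = ∑ j ∈ Icc 1 (h-1), ∑ j' ∈ Icc 1 (h-1), ((k:ℤ) - 1 - ((k * max j j' /h : ℕ):ℤ)) := by
        refine Finset.sum_congr rfl fun j hj => Finset.sum_congr rfl fun j' hj' => ?_
        simp only [mem_Icc] at hj hj'
        exact step2 (max j j') (le_trans hj.1 (Nat.le_max_left _ _)) (max_le hj.2 hj'.2)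
    _ = ∑ M ∈ Icc 1 (h-1), (2*(M:ℤ)-1) * ((k:ℤ) - 1 - ((k*M/h : ℕ):ℤ)) :=
        sum_max (fun M => (k:ℤ) - 1 - ((k*M/h : ℕ):ℤ)) (h-1)

lemma MAIN {h k : ℕ} (cop : Nat.Coprime h k) (hh : 0 < h) (hk : 0 < k) :
    4*(h:ℤ)^2*k*Tz h k + 4*h*k^2*Tz k h
      = 2*h*((h:ℤ)^2-1)*Sz k + 2*h*k^2*((k:ℤ)-1)*((h:ℤ)-1)^2 + (h:ℤ)*k^2*((k:ℤ)-1)*((h:ℤ)-1) := by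
  set A : ℤ := ∑ M ∈ Icc 1 (h-1), (M:ℤ) with hA
  set D : ℤ := ∑ M ∈ Icc 1 (h-1), ((k*M/h : ℕ):ℤ) with hD
  have r1 : (h:ℤ)^2 * Sz k - 2*h*k* Tz h k + k^2 * Vz h k = Sz k := L8 cop
  have r2 : Vz h k = ((k:ℤ)-1)*(2*A - ((h:ℤ)-1)) - 2 * Tz k h + D := by
    rw [Vz_eq cop hh hk]
    have expand : ∀ M ∈ Icc 1 (h-1), (2*(M:ℤ)-1) * ((k:ℤ) - 1 - ((k*M/h : ℕ):ℤ))
        = 2*((k:ℤ)-1)*(M:ℤ) - ((k:ℤ)-1) - 2*((M:ℤ)*((k*M/h : ℕ):ℤ)) + ((k*M/h : ℕ):ℤ) := by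
      intro M _; ring
    rw [Finset.sum_congr rfl expand, Finset.sum_add_distrib, Finset.sum_sub_distrib,
      Finset.sum_sub_distrib, ← Finset.mul_sum, ← Finset.mul_sum, Finset.sum_const,
      Nat.card_Icc, Nat.add_sub_cancel]
    have : Tz k h = ∑ M ∈ Icc 1 (h-1), (M:ℤ)*((k*M/h : ℕ):ℤ) := rfl
    rw [← this, ← hA, ← hD, nsmul_eq_mul, Nat.cast_pred hh]
    ring
  have r3 : 2*A = ((h:ℤ)-1)*h := by
    have := gauss1 (h-1)
    rw [Nat.cast_pred hh] at this
    rw [hA, this]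
    ring
  have r4 : (h:ℤ)*D + A = k*A := by
    have percast : ∀ M ∈ Icc 1 (h-1), ((k*M % h : ℕ):ℤ) = (k:ℤ)*(M:ℤ) - h*((k*M/h : ℕ):ℤ) := by
      intro M _
      have h0 := Nat.mod_add_div (k*M) h
      have h2 : ((k*M % h : ℕ):ℤ) + (h:ℤ) * ((k*M/h : ℕ):ℤ) = (k:ℤ)*(M:ℤ) := by exact_mod_cast h0
      linarith
    have hperm : ∑ M ∈ Icc 1 (h-1), ((k*M % h : ℕ):ℤ) = A := by
      rw [hA]
      exact sum_mod_perm cop.symm (fun a => (a:ℤ))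
    have hsplit : ∑ M ∈ Icc 1 (h-1), ((k*M % h : ℕ):ℤ)
        = (k:ℤ)*A - (h:ℤ)*D := by
      rw [Finset.sum_congr rfl percast, Finset.sum_sub_distrib, ← Finset.mul_sum, ← Finset.mul_sum,
        ← hA, ← hD]
    rw [hperm] at hsplit
    linarith
  linear_combination (-2*(h:ℤ))*r1 + (2*(h:ℤ)*k^2)*r2 + (2*(h:ℤ)*k^2*((k:ℤ)-1)+k^2*((k:ℤ)-1))*r3 + (2*(k:ℤ)^2)*r4

lemma fract_nat_div (a k : ℕ) (hk : 0 < k) :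
    Int.fract ((a:ℝ)/(k:ℝ)) = ((a % k : ℕ):ℝ)/k := by
  have hk0 : (k:ℝ) ≠ 0 := Nat.cast_ne_zero.mpr (by omega)
  have hd := Nat.div_add_mod a k
  have hmlt : a % k < k := Nat.mod_lt a hk
  generalize hq : a/k = q at hd
  generalize hr : a % k = r at hd hmlt ⊢
  have hsplit : (a:ℝ)/(k:ℝ) = (((q:ℕ):ℤ):ℝ) + ((r:ℕ):ℝ)/k := by
    have h0 : (k:ℝ) * ((q:ℕ):ℝ) + ((r:ℕ):ℝ) = (a:ℝ) := by exact_mod_cast hd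
    push_cast
    field_simp
    linear_combination (-1)*h0
  rw [hsplit, Int.fract_intCast_add, Int.fract_eq_self.mpr ?_]
  constructor
  · positivity
  · rw [div_lt_one (by positivity)]
    exact_mod_cast hmlt

lemma E1z {h k : ℕ} (cop : Nat.Coprime h k) (hk : 0 < k) :
    ∑ i ∈ Icc 1 (k-1), (2*(i:ℤ) - k)*(2*((h*i % k : ℕ):ℤ) - k)
      = 4 * Pz h k - (k:ℤ)^2*((k:ℤ)-1) := by
  have expand : ∀ i ∈ Icc 1 (k-1), (2*(i:ℤ) - k)*(2*((h*i % k : ℕ):ℤ) - k)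
      = 4*((i:ℤ) * ((h*i % k : ℕ):ℤ)) - 2*(k:ℤ)*((h*i % k : ℕ):ℤ) - 2*(k:ℤ)*(i:ℤ) + (k:ℤ)^2 := by
    intro i _; ring
  rw [Finset.sum_congr rfl expand, Finset.sum_add_distrib, Finset.sum_sub_distrib,
    Finset.sum_sub_distrib, ← Finset.mul_sum, ← Finset.mul_sum, ← Finset.mul_sum,
    Finset.sum_const, Nat.card_Icc, Nat.add_sub_cancel, nsmul_eq_mul,
    sum_mod_perm cop (fun a => (a:ℤ))]
  have hg := gauss1 (k-1)
  rw [Nat.cast_pred hk] at hg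
  have : Pz h k = ∑ i ∈ Icc 1 (k-1), (i:ℤ) * ((h*i % k : ℕ):ℤ) := rfl
  rw [← this, Nat.cast_pred hk]
  nlinarith [hg]

lemma E1 {h k : ℕ} (cop : Nat.Coprime h k) (hh : 0 < h) (hk : 0 < k) :
    4*(k:ℝ)^2 * dedekindSum (h:ℤ) (k:ℤ) = ((4 * Pz h k - (k:ℤ)^2*((k:ℤ)-1) : ℤ) : ℝ) := by
  have hk0 : (k:ℝ) ≠ 0 := Nat.cast_ne_zero.mpr (by omega)
  have hsum : dedekindSum (h:ℤ) (k:ℤ)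
      = ∑ i ∈ Icc 1 (k-1), ((i:ℝ)/k - 1/2) * (((h*i % k : ℕ):ℝ)/k - 1/2) := by
    unfold dedekindSum
    rw [Int.toNat_natCast]
    obtain ⟨k', rfl⟩ : ∃ k', k = k'+1 := ⟨k-1, by omega⟩
    rw [Finset.sum_Icc_succ_top (by omega), Nat.add_sub_cancel]
    have htop : saw (((k'+1 : ℕ):ℝ) / (((k'+1:ℕ):ℤ):ℝ)) = 0 := by
      have : (((k'+1 : ℕ)):ℝ) / (((k'+1:ℕ):ℤ):ℝ) = 1 := by
        push_cast
        field_simp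
      rw [this, saw_one]
    rw [htop, zero_mul, add_zero]
    refine Finset.sum_congr rfl fun i hi => ?_
    simp only [mem_Icc] at hi
    have hsaw1 : saw ((i:ℝ) / (((k'+1:ℕ):ℤ):ℝ)) = (i:ℝ)/((k'+1:ℕ):ℝ) - 1/2 := by
      unfold saw
      have e : ((((k'+1):ℕ):ℤ):ℝ) = ((k'+1:ℕ):ℝ) := by push_cast; ring
      rw [e, Int.fract_eq_self.mpr ⟨by positivity, by
        rw [div_lt_one (by positivity)]
        exact_mod_cast Nat.lt_succ_of_le hi.2⟩]
      rw [if_neg]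
      have h1 : (0:ℝ) < (i:ℝ) := by exact_mod_cast hi.1
      have h2 : (0:ℝ) < ((k'+1:ℕ):ℝ) := by positivity
      positivity
    have hsaw2 : saw ((((h:ℕ):ℤ):ℝ) * (i:ℝ) / (((k'+1:ℕ):ℤ):ℝ))
        = ((h*i % (k'+1) : ℕ):ℝ)/((k'+1:ℕ):ℝ) - 1/2 := by
      unfold saw
      have e : ((((h:ℕ)):ℤ):ℝ) * (i:ℝ) / (((k'+1:ℕ):ℤ):ℝ) = ((h*i : ℕ):ℝ) / ((k'+1:ℕ):ℝ) := by
        push_cast; ring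
      rw [e, fract_nat_div _ _ (by omega), if_neg]
      have hmne : h*i % (k'+1) ≠ 0 := by
        intro h0
        have hdvd : (k'+1) ∣ h * i := Nat.dvd_of_mod_eq_zero h0
        have : (k'+1) ∣ i := (Nat.Coprime.dvd_of_dvd_mul_left cop.symm) hdvd
        have := Nat.le_of_dvd (by omega) this
        omega
      have h1 : (0:ℝ) < ((h*i % (k'+1) : ℕ):ℝ) := by exact_mod_cast Nat.pos_of_ne_zero hmne
      positivity
    rw [hsaw1, hsaw2]
  rw [hsum, Finset.mul_sum]
  have step : ∀ i ∈ Icc 1 (k-1), 4*(k:ℝ)^2 * (((i:ℝ)/k - 1/2) * (((h*i % k : ℕ):ℝ)/k - 1/2))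
      = ((2*(i:ℤ) - k)*(2*((h*i % k : ℕ):ℤ) - k) : ℤ) := by
    intro i _
    generalize (h*i % k : ℕ) = m
    push_cast
    field_simp
    ring
  rw [Finset.sum_congr rfl step, ← Int.cast_sum, E1z cop hk]


lemma recip (h k : ℕ) (hh : 0 < h) (hk : 0 < k) (cop : Nat.Coprime h k) :
    12 * (dedekindSum (h:ℤ) (k:ℤ) + dedekindSum (k:ℤ) (h:ℤ))
      = -3 + (h:ℝ)/k + (k:ℝ)/h + 1/((h:ℝ)*(k:ℝ)) := by
  have hk0 : (k:ℝ) ≠ 0 := Nat.cast_ne_zero.mpr (by omega)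
  have hh0 : (h:ℝ) ≠ 0 := Nat.cast_ne_zero.mpr (by omega)
  have e1 : dedekindSum (h:ℤ) (k:ℤ)
      = (4*((Pz h k : ℤ):ℝ) - (k:ℝ)^2*((k:ℝ)-1))/(4*(k:ℝ)^2) := by
    rw [eq_div_iff (by positivity)]
    have hE := E1 cop hh hk
    push_cast at hE
    linarith
  have e2 : dedekindSum (k:ℤ) (h:ℤ)
      = (4*((Pz k h : ℤ):ℝ) - (h:ℝ)^2*((h:ℝ)-1))/(4*(h:ℝ)^2) := by
    rw [eq_div_iff (by positivity)]
    have hE := E1 cop.symm hk hh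
    push_cast at hE
    linarith
  have eP1 : ((Pz h k : ℤ):ℝ) = (h:ℝ)*((Sz k : ℤ):ℝ) - (k:ℝ)*((Tz h k : ℤ):ℝ) := by
    exact_mod_cast congrArg (Int.cast : ℤ → ℝ) (Pz_eq h k)
  have eP2 : ((Pz k h : ℤ):ℝ) = (k:ℝ)*((Sz h : ℤ):ℝ) - (h:ℝ)*((Tz k h : ℤ):ℝ) := by
    exact_mod_cast congrArg (Int.cast : ℤ → ℝ) (Pz_eq k h)
  have eT2 : ((Tz k h : ℤ):ℝ)
      = (2*(h:ℝ)*((h:ℝ)^2-1)*((Sz k : ℤ):ℝ) + 2*(h:ℝ)*(k:ℝ)^2*((k:ℝ)-1)*((h:ℝ)-1)^2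
          + (h:ℝ)*(k:ℝ)^2*((k:ℝ)-1)*((h:ℝ)-1) - 4*(h:ℝ)^2*(k:ℝ)*((Tz h k : ℤ):ℝ))
        /(4*(h:ℝ)*(k:ℝ)^2) := by
    rw [eq_div_iff (by positivity)]
    have hM := MAIN cop hh hk
    have hM' : ((4*(h:ℤ)^2*k*Tz h k + 4*h*k^2*Tz k h : ℤ):ℝ)
        = ((2*(h:ℤ)*((h:ℤ)^2-1)*Sz k + 2*(h:ℤ)*(k:ℤ)^2*((k:ℤ)-1)*((h:ℤ)-1)^2
            + (h:ℤ)*(k:ℤ)^2*((k:ℤ)-1)*((h:ℤ)-1) : ℤ):ℝ) := congrArg (fun z : ℤ => (z:ℝ)) hM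
    push_cast at hM'
    linarith
  have eS1 : ((Sz k : ℤ):ℝ) = ((k:ℝ)-1)*(k:ℝ)*(2*(k:ℝ)-1)/6 := by
    rw [eq_div_iff (by norm_num)]
    have hg := gauss2 (k-1)
    rw [Nat.cast_pred hk] at hg
    have hg' : ((6 * ∑ i ∈ Icc 1 (k-1), (i:ℤ)^2 : ℤ):ℝ)
        = ((((k:ℤ)-1) * (((k:ℤ)-1)+1) * (2*((k:ℤ)-1)+1) : ℤ):ℝ) := congrArg (fun z : ℤ => (z:ℝ)) hg
    push_cast at hg'
    have : ((Sz k : ℤ):ℝ) = ((∑ i ∈ Icc 1 (k-1), (i:ℤ)^2 : ℤ):ℝ) := rfl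
    rw [this]
    push_cast
    linarith
  have eS2 : ((Sz h : ℤ):ℝ) = ((h:ℝ)-1)*(h:ℝ)*(2*(h:ℝ)-1)/6 := by
    rw [eq_div_iff (by norm_num)]
    have hg := gauss2 (h-1)
    rw [Nat.cast_pred hh] at hg
    have hg' : ((6 * ∑ i ∈ Icc 1 (h-1), (i:ℤ)^2 : ℤ):ℝ)
        = ((((h:ℤ)-1) * (((h:ℤ)-1)+1) * (2*((h:ℤ)-1)+1) : ℤ):ℝ) := congrArg (fun z : ℤ => (z:ℝ)) hg
    push_cast at hg'
    have : ((Sz h : ℤ):ℝ) = ((∑ i ∈ Icc 1 (h-1), (i:ℤ)^2 : ℤ):ℝ) := rfl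
    rw [this]
    push_cast
    linarith
  rw [e1, e2, eP1, eP2, eT2, eS1, eS2]
  field_simp
  ring

theorem recip_int (a b : ℤ) (ha : 0 < a) (hb : 0 < b) (cop : Int.gcd a b = 1) :
    12 * dedekindSum a b = -3 + (a:ℝ)/b + (b:ℝ)/a + 1/((a:ℝ)*b) - 12 * dedekindSum b a := by
  obtain ⟨A, rfl⟩ := Int.eq_ofNat_of_zero_le ha.le
  obtain ⟨B, rfl⟩ := Int.eq_ofNat_of_zero_le hb.le
  have hA : 0 < A := by exact_mod_cast ha
  have hB : 0 < B := by exact_mod_cast hb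
  have cop' : Nat.Coprime A B := by rwa [Int.gcd_natCast_natCast] at cop
  have hr := recip A B hA hB cop'
  push_cast
  push_cast at hr
  linarith

lemma dsum_mod (a b : ℤ) (hb : 0 < b) : dedekindSum a b = dedekindSum (a % b) b := by
  unfold dedekindSum
  refine Finset.sum_congr rfl fun i _ => ?_
  congr 1
  have hb0 : (b:ℝ) ≠ 0 := by exact_mod_cast hb.ne'
  have hd : (b:ℝ) * ((a/b : ℤ):ℝ) + ((a % b : ℤ):ℝ) = (a:ℝ) := by
    exact_mod_cast congrArg (Int.cast : ℤ → ℝ) (Int.mul_ediv_add_emod a b)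
  have key : (a:ℝ)*(i:ℝ)/(b:ℝ) = (((a/b : ℤ)*(i:ℕ) : ℤ):ℝ) + ((a % b : ℤ):ℝ)*(i:ℝ)/(b:ℝ) := by
    push_cast
    field_simp
    linear_combination (-(i:ℝ)) * hd
  rw [key, saw_intCast_add]

lemma dsum_one (m : ℤ) : dedekindSum m 1 = 0 := by
  unfold dedekindSum
  norm_num [saw_one]

theorem example_computation :
    12 * dedekindSum 627251 172769740 = -3 + 2 / 172769740 + 25090 / 6886 ∧
      |12 * dedekindSum 627251 172769740 - 7 / 11| < 1 / 100 := by
  have v_1_2 : (12:ℝ) * dedekindSum 1 2 = 0/1 := by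
    have e := recip_int 1 2 (by norm_num) (by norm_num) (by norm_num)
    push_cast at e
    rw [dsum_one] at e
    norm_num at e
    linarith
  have v_2_3 : (12:ℝ) * dedekindSum 2 3 = -2/3 := by
    have e := recip_int 2 3 (by norm_num) (by norm_num) (by norm_num)
    push_cast at e
    rw [dsum_mod 3 2 (by norm_num)] at e
    norm_num at e
    linarith [v_1_2]
  have v_3_11 : (12:ℝ) * dedekindSum 3 11 = 18/11 := by
    have e := recip_int 3 11 (by norm_num) (by norm_num) (by norm_num)
    push_cast at e
    rw [dsum_mod 11 3 (by norm_num)] at e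
    norm_num at e
    linarith [v_2_3]
  have v_11_25 : (12:ℝ) * dedekindSum 11 25 = -48/25 := by
    have e := recip_int 11 25 (by norm_num) (by norm_num) (by norm_num)
    push_cast at e
    rw [dsum_mod 25 11 (by norm_num)] at e
    norm_num at e
    linarith [v_3_11]
  have v_25_6886 : (12:ℝ) * dedekindSum 25 6886 = 3018/11 := by
    have e := recip_int 25 6886 (by norm_num) (by norm_num) (by norm_num)
    push_cast at e
    rw [dsum_mod 6886 25 (by norm_num)] at e
    norm_num at e
    linarith [v_11_25]
  have v_6886_20683 : (12:ℝ) * dedekindSum 6886 20683 = -5667702/20683 := by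
    have e := recip_int 6886 20683 (by norm_num) (by norm_num) (by norm_num)
    push_cast at e
    rw [dsum_mod 20683 6886 (by norm_num)] at e
    norm_num at e
    linarith [v_25_6886]
  have v_20683_27569 : (12:ℝ) * dedekindSum 20683 27569 = 7529376/27569 := by
    have e := recip_int 20683 27569 (by norm_num) (by norm_num) (by norm_num)
    push_cast at e
    rw [dsum_mod 27569 20683 (by norm_num)] at e
    norm_num at e
    linarith [v_6886_20683]
  have v_27569_48252 : (12:ℝ) * dedekindSum 27569 48252 = -6605425/24126 := by
    have e := recip_int 27569 48252 (by norm_num) (by norm_num) (by norm_num)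
    push_cast at e
    rw [dsum_mod 48252 27569 (by norm_num)] at e
    norm_num at e
    linarith [v_20683_27569]
  have v_48252_75821 : (12:ℝ) * dedekindSum 48252 75821 = 20698860/75821 := by
    have e := recip_int 48252 75821 (by norm_num) (by norm_num) (by norm_num)
    push_cast at e
    rw [dsum_mod 75821 48252 (by norm_num)] at e
    norm_num at e
    linarith [v_27569_48252]
  have v_75821_275715 : (12:ℝ) * dedekindSum 75821 275715 = -75017918/275715 := by
    have e := recip_int 75821 275715 (by norm_num) (by norm_num) (by norm_num)
    push_cast at e
    rw [dsum_mod 275715 75821 (by norm_num)] at e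
    norm_num at e
    linarith [v_48252_75821]
  have v_275715_627251 : (12:ℝ) * dedekindSum 275715 627251 = 170486550/627251 := by
    have e := recip_int 275715 627251 (by norm_num) (by norm_num) (by norm_num)
    push_cast at e
    rw [dsum_mod 627251 275715 (by norm_num)] at e
    norm_num at e
    linarith [v_75821_275715]
  have v_627251_172769740 : (12:ℝ) * dedekindSum 627251 172769740 = 55599441/86384870 := by
    have e := recip_int 627251 172769740 (by norm_num) (by norm_num) (by norm_num)
    push_cast at e
    rw [dsum_mod 172769740 627251 (by norm_num)] at e
    norm_num at e
    linarith [v_275715_627251]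
  constructor
  · rw [v_627251_172769740]
    norm_num
  · rw [v_627251_172769740, abs_lt]
    constructor <;> norm_num
end
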